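/- arXiv:1710.09999 — 3 statements merged into one kernel-verified Lean document; each statement's English description precedes it below -/
import Mathlib

section
/- In a multiplicity-free semi-simple tensor system over a commutative ring R, for any L-tuple λ̃ = (λ_1,…,λ_L), any ν, ν' ∈ I, and any 1 ≤ i ≤ L−1, the two-site projection operators are orthogonal idempotents: p_i^{(ν)} p_i^{(ν')} = δ_ν^{ν'} p_i^{(ν)} as operators on H_{λ̃}. -/
open scoped Classical
open Fin.NatCast

noncomputable section

/-- A multiplicity-free semi-simple tensor system over a commutative ring `R`,
with index set `I`, fusion constants `N`, and F-moves `F`, `Fbar`.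
`F a b c d e f` denotes `(F^{abc}_d)^e_f` and `Fbar a b c d f e` denotes `(F̄^{abc}_d)^f_e`. -/
structure TensorSystem (R : Type*) [CommRing R] (I : Type*) where
  N : I → I → I → ℕ
  F : I → I → I → I → I → I → R
  Fbar : I → I → I → I → I → I → R
  N_le_one : ∀ a b c, N a b c ≤ 1
  N_assoc : ∀ a b c d, (∑ᶠ e, N a b e * N e c d) = ∑ᶠ e, N a e d * N b c e
  N_finite : ∀ a b, (Function.support fun c => N a b c).Finite
  F_vanish : ∀ a b c d e f, N a b e * N b c f * N a f d * N e c d = 0 → F a b c d e f = 0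
  Fbar_vanish : ∀ a b c d e f, N a b e * N b c f * N a f d * N e c d = 0 → Fbar a b c d f e = 0
  pentagon : ∀ a b c d e f g k l,
      (∑ᶠ h, F a b c g f h * F a h d e g k * F b c d k h l) = F f c d e g l * F a b l e f k
  F_Fbar : ∀ a b c d e e',
      (∑ᶠ f, F a b c d e f * Fbar a b c d f e')
        = (if e = e' then (1 : R) else 0) * (N a b e : R) * (N e c d : R)
  Fbar_F : ∀ a b c d f f',
      (∑ᶠ e, Fbar a b c d f' e * F a b c d e f)
        = (if f = f' then (1 : R) else 0) * (N b c f : R) * (N a f d : R)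

namespace TensorSystem

variable {R : Type*} [CommRing R] {I : Type*}

/-- `μ = (μ₀, μ₁, …, μ_L)` is a fusion path for the tuple `λ̃ = (lam 1, …, lam L)`:
`μ₀ ∈ I0` and `N_{μ_{i-1} λ_i}^{μ_i} = 1` for `1 ≤ i ≤ L`. -/
def IsPath (TS : TensorSystem R I) (L : ℕ) (I0 : Set I) (lam : ℕ → I)
    (μ : Fin (L + 1) → I) : Prop :=
  μ 0 ∈ I0 ∧ ∀ i : ℕ, 1 ≤ i → i ≤ L →
    TS.N (μ ((i - 1 : ℕ) : Fin (L + 1))) (lam i) (μ ((i : ℕ) : Fin (L + 1))) = 1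

/-- Matrix element `⟨μ'| p_i^{(ν)} |μ⟩` of the two-site projection operator. -/
def pMat (TS : TensorSystem R I) (L : ℕ) (lam : ℕ → I) (i : ℕ) (ν : I)
    (μ' μ : Fin (L + 1) → I) : R :=
  (∏ j ∈ Finset.univ.erase ((i : ℕ) : Fin (L + 1)), if μ j = μ' j then (1 : R) else 0)
    * TS.Fbar (μ ((i - 1 : ℕ) : Fin (L + 1))) (lam i) (lam (i + 1))
        (μ ((i + 1 : ℕ) : Fin (L + 1))) ν (μ' ((i : ℕ) : Fin (L + 1)))
    * TS.F (μ ((i - 1 : ℕ) : Fin (L + 1))) (lam i) (lam (i + 1))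
        (μ ((i + 1 : ℕ) : Fin (L + 1))) (μ ((i : ℕ) : Fin (L + 1))) ν

/-- Matrix elements of the composition of two operators on `H_{λ̃}`,
summing over the fusion-path basis. -/
def mulMat (TS : TensorSystem R I) (L : ℕ) (I0 : Set I) (lam : ℕ → I)
    (A B : (Fin (L + 1) → I) → (Fin (L + 1) → I) → R)
    (μ' μ : Fin (L + 1) → I) : R :=
  ∑ᶠ μ'' ∈ {x : Fin (L + 1) → I | TS.IsPath L I0 lam x}, A μ' μ'' * B μ'' μ

/-- Two operators on `H_{λ̃}` are equal iff all their matrix elements between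
fusion-path basis vectors agree. -/
def MatEqOn (TS : TensorSystem R I) (L : ℕ) (I0 : Set I) (lam : ℕ → I)
    (A B : (Fin (L + 1) → I) → (Fin (L + 1) → I) → R) : Prop :=
  ∀ μ' μ : Fin (L + 1) → I, TS.IsPath L I0 lam μ' → TS.IsPath L I0 lam μ → A μ' μ = B μ' μ

/-- Extended fusion numbers `N_{a a₁ ⋯ aₙ}^b` along a list `[a₁, …, aₙ]`. -/
def Nseq (TS : TensorSystem R I) : I → List I → I → ℕ
  | a, [], b => if a = b then 1 else 0
  | a, c :: rest, b => ∑ᶠ x, TS.N a c x * Nseq TS x rest b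

/-- `ν` acts one-dimensionally on the left of `μ`. -/
def ActsOneDimLeft (TS : TensorSystem R I) (ν μ : I) : Prop :=
  (∑ᶠ μ' : I, TS.N ν μ μ') = 1

/-- `ν` acts one-dimensionally on the right of `μ`. -/
def ActsOneDimRight (TS : TensorSystem R I) (ν μ : I) : Prop :=
  (∑ᶠ μ' : I, TS.N μ ν μ') = 1

end TensorSystem

/-- Matrix elements of the identity operator. -/
def deltaMat {R : Type*} [CommRing R] {I : Type*} (L : ℕ)
    (μ' μ : Fin (L + 1) → I) : R :=
  ∏ j : Fin (L + 1), if μ j = μ' j then (1 : R) else 0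

/-- Scalar multiple of a matrix of operator matrix elements. -/
def smulMat {R : Type*} [CommRing R] {α : Sort*} (c : R) (A : α → α → R) : α → α → R :=
  fun x y => c * A x y

/-- two-site projection operators are orthogonal idempotents. -/
theorem projection_operators_orthogonal_idempotent
    {R : Type*} [CommRing R] {I : Type*}
    (TS : TensorSystem R I) (L : ℕ) (I0 : Set I) (hI0 : I0.Finite)
    (lam : ℕ → I) (ν ν' : I) (i : ℕ) (hi : 1 ≤ i) (hiL : i + 1 ≤ L) :
    TS.MatEqOn L I0 lam
      (TS.mulMat L I0 lam
      (TS.pMat L lam (i) ν)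
      (TS.pMat L lam (i) ν'))
      (smulMat (if ν = ν' then (1 : R) else 0) (TS.pMat L lam (i) ν)) := by
  intro μ' μ hμ' hμ
  have hcast : ∀ m k : ℕ, m ≤ L → k ≤ L →
      ((m : ℕ) : Fin (L+1)) = ((k : ℕ) : Fin (L+1)) → m = k := by
    intro m k hm hk h
    have := congrArg Fin.val h
    rwa [Fin.val_natCast, Fin.val_natCast, Nat.mod_eq_of_lt (by omega),
      Nat.mod_eq_of_lt (by omega)] at this
  have him : ((i - 1 : ℕ) : Fin (L+1)) ≠ ((i : ℕ) : Fin (L+1)) := fun h => by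
    have := hcast _ _ (by omega) (by omega) h; omega
  have hip : ((i + 1 : ℕ) : Fin (L+1)) ≠ ((i : ℕ) : Fin (L+1)) := fun h => by
    have := hcast _ _ (by omega) (by omega) h; omega
  have h0 : (0 : Fin (L+1)) ≠ ((i : ℕ) : Fin (L+1)) := by
    intro h
    rw [show (0 : Fin (L+1)) = ((0 : ℕ) : Fin (L+1)) by norm_num] at h
    have := hcast 0 i (by omega) (by omega) h; omega
  have pzero : ∀ (ν₀ : I) (α β : Fin (L+1) → I) (j : Fin (L+1)),
      j ≠ ((i : ℕ) : Fin (L+1)) → β j ≠ α j → TS.pMat L lam i ν₀ α β = 0 := by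
    intro ν₀ α β j hj hne
    unfold TensorSystem.pMat
    have hzero : (if β j = α j then (1:R) else 0) = 0 := if_neg hne
    rw [Finset.prod_eq_zero (Finset.mem_erase.mpr ⟨hj, Finset.mem_univ j⟩) hzero]
    ring
  by_cases hall : ∀ j : Fin (L+1), j ≠ ((i : ℕ) : Fin (L+1)) → μ j = μ' j
  · -- main case
    classical
    set S : Set (Fin (L+1) → I) := {x | TS.IsPath L I0 lam x} with hS
    set f : (Fin (L+1) → I) → R :=
      fun μ'' => TS.pMat L lam i ν μ' μ'' * TS.pMat L lam i ν' μ'' μ with hf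
    set g : I → (Fin (L+1) → I) := fun x => Function.update μ ((i : ℕ) : Fin (L+1)) x with hg
    have hgiF : ∀ x, g x ((i : ℕ) : Fin (L+1)) = x := fun x => Function.update_self _ _ _
    have hgne : ∀ (x : I) (j : Fin (L+1)), j ≠ ((i : ℕ) : Fin (L+1)) → g x j = μ j :=
      fun x j hj => Function.update_of_ne hj _ _
    have hginj : Function.Injective g := by
      intro x y hxy
      have := congrFun hxy ((i : ℕ) : Fin (L+1))
      rwa [hgiF, hgiF] at this
    set a := μ ((i - 1 : ℕ) : Fin (L+1)) with ha
    set b := lam i with hb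
    set c := lam (i + 1) with hc
    set d := μ ((i + 1 : ℕ) : Fin (L+1)) with hd
    have hFz : ∀ x : I, TS.N a b x * TS.N x c d = 0 → TS.F a b c d x ν = 0 := by
      intro x hx
      apply TS.F_vanish
      rcases Nat.mul_eq_zero.mp hx with h | h <;> simp [h]
    have hpA : ∀ x : I, TS.pMat L lam i ν μ' (g x)
        = TS.Fbar a b c d ν (μ' ((i : ℕ) : Fin (L+1))) * TS.F a b c d x ν := by
      intro x
      unfold TensorSystem.pMat
      rw [hgne x _ him, hgne x _ hip, hgiF]
      have h1 : (∏ j ∈ Finset.univ.erase ((i : ℕ) : Fin (L+1)),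
          if g x j = μ' j then (1:R) else 0) = 1 := by
        apply Finset.prod_eq_one
        intro j hj
        have hjne := (Finset.mem_erase.mp hj).1
        rw [if_pos (by rw [hgne x j hjne]; exact hall j hjne)]
      rw [h1, one_mul]
    have hpB : ∀ x : I, TS.pMat L lam i ν' (g x) μ
        = TS.Fbar a b c d ν' x * TS.F a b c d (μ ((i : ℕ) : Fin (L+1))) ν' := by
      intro x
      unfold TensorSystem.pMat
      rw [hgiF]
      have h1 : (∏ j ∈ Finset.univ.erase ((i : ℕ) : Fin (L+1)),
          if μ j = g x j then (1:R) else 0) = 1 := by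
        apply Finset.prod_eq_one
        intro j hj
        have hjne := (Finset.mem_erase.mp hj).1
        rw [if_pos (hgne x j hjne).symm]
      rw [h1, one_mul]
    have hmem : ∀ x : I, TS.N a b x = 1 → TS.N x c d = 1 → g x ∈ S := by
      intro x h1 h2
      constructor
      · rw [hgne x 0 h0]; exact hμ.1
      · intro j hj1 hjL
        by_cases hji : j = i
        · subst hji
          rw [hgne x _ him, hgiF]; exact h1
        · by_cases hji1 : j = i + 1
          · subst hji1
            rw [show ((i + 1 - 1 : ℕ) : Fin (L+1)) = ((i : ℕ) : Fin (L+1)) by norm_num,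
              hgiF, hgne x _ hip]
            exact h2
          · have e1 : ((j - 1 : ℕ) : Fin (L+1)) ≠ ((i : ℕ) : Fin (L+1)) := fun h => by
              have := hcast _ _ (by omega) (by omega) h; omega
            have e2 : ((j : ℕ) : Fin (L+1)) ≠ ((i : ℕ) : Fin (L+1)) := fun h => by
              have := hcast _ _ (by omega) (by omega) h; omega
            rw [hgne x _ e1, hgne x _ e2]
            exact hμ.2 j hj1 hjL
    have hindic : ∀ x : I, Set.indicator S f (g x) = f (g x) := by
      intro x
      by_cases hx : g x ∈ S
      · exact Set.indicator_of_mem hx f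
      · rw [Set.indicator_of_notMem hx]
        have hz : TS.N a b x * TS.N x c d = 0 := by
          by_contra hc0
          have h1 := TS.N_le_one a b x
          have h2 := TS.N_le_one x c d
          obtain ⟨h4, h5⟩ := Nat.mul_ne_zero_iff.mp hc0
          have h3 : TS.N a b x = 1 ∧ TS.N x c d = 1 := by
            constructor <;> omega
          exact hx (hmem x h3.1 h3.2)
        rw [hf]
        simp only [hpA x, hFz x hz, mul_zero, zero_mul]
    have hsupp : ∀ μ'' : Fin (L+1) → I, f μ'' ≠ 0 → μ'' ∈ Set.range g := by
      intro μ'' hne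
      have hagree : ∀ j, j ≠ ((i : ℕ) : Fin (L+1)) → μ'' j = μ j := by
        intro j hj
        by_contra hc0
        apply hne
        show TS.pMat L lam i ν μ' μ'' * TS.pMat L lam i ν' μ'' μ = 0
        rw [pzero ν' μ'' μ j hj (Ne.symm hc0), mul_zero]
      refine ⟨μ'' ((i : ℕ) : Fin (L+1)), ?_⟩
      funext j
      by_cases hj : j = ((i : ℕ) : Fin (L+1))
      · subst hj; exact hgiF _
      · rw [hgne _ j hj, hagree j hj]
    have hfin : (Function.support fun x : I =>
        TS.Fbar a b c d ν' x * TS.F a b c d x ν).Finite := by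
      apply (TS.N_finite a b).subset
      intro x hx
      simp only [Function.mem_support] at hx ⊢
      intro h
      exact hx (by rw [hFz x (by rw [h, zero_mul]), mul_zero])
    -- compute the LHS
    have key : TS.mulMat L I0 lam (TS.pMat L lam i ν) (TS.pMat L lam i ν') μ' μ
        = (TS.Fbar a b c d ν (μ' ((i : ℕ) : Fin (L+1)))
            * TS.F a b c d (μ ((i : ℕ) : Fin (L+1))) ν')
          * ((if ν = ν' then (1:R) else 0) * (TS.N b c ν : R) * (TS.N a ν d : R)) := by
      unfold TensorSystem.mulMat
      rw [← hS]
      rw [finsum_mem_def]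
      rw [← finsum_mem_univ]
      rw [finsum_mem_inter_support_eq' _ Set.univ (Set.range g) ?hiff]
      case hiff =>
        intro x hx
        simp only [Set.mem_univ, true_iff]
        apply hsupp
        intro hfx
        apply hx
        by_cases hxS : x ∈ S
        · rw [Set.indicator_of_mem hxS]; exact hfx
        · exact Set.indicator_of_notMem hxS _
      rw [finsum_mem_range hginj]
      have : ∀ x : I, Set.indicator S f (g x)
          = (TS.Fbar a b c d ν (μ' ((i : ℕ) : Fin (L+1)))
              * TS.F a b c d (μ ((i : ℕ) : Fin (L+1))) ν')
            * (TS.Fbar a b c d ν' x * TS.F a b c d x ν) := by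
        intro x
        rw [hindic x, hf]
        simp only [hpA x, hpB x]
        ring
      rw [finsum_congr this, ← mul_finsum' _ _ hfin, TS.Fbar_F a b c d ν ν']
    rw [key]
    have hpR : TS.pMat L lam i ν μ' μ
        = TS.Fbar a b c d ν (μ' ((i : ℕ) : Fin (L+1)))
          * TS.F a b c d (μ ((i : ℕ) : Fin (L+1))) ν := by
      unfold TensorSystem.pMat
      have h1 : (∏ j ∈ Finset.univ.erase ((i : ℕ) : Fin (L+1)),
          if μ j = μ' j then (1:R) else 0) = 1 := by
        apply Finset.prod_eq_one
        intro j hj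
        exact if_pos (hall j (Finset.mem_erase.mp hj).1)
      rw [h1, one_mul]
    simp only [smulMat, hpR]
    by_cases hνν : ν = ν'
    · subst hνν
      simp only [if_pos rfl, one_mul]
      by_cases hbc : TS.N b c ν = 0
      · rw [TS.F_vanish a b c d (μ ((i : ℕ) : Fin (L+1))) ν (by simp [hbc])]
        simp
      · by_cases had : TS.N a ν d = 0
        · rw [TS.F_vanish a b c d (μ ((i : ℕ) : Fin (L+1))) ν (by simp [had])]
          simp
        · have e1 : TS.N b c ν = 1 := by have := TS.N_le_one b c ν; omega
          have e2 : TS.N a ν d = 1 := by have := TS.N_le_one a ν d; omega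
          rw [e1, e2]
          push_cast
          ring
    · simp [hνν]
  · push_neg at hall
    obtain ⟨j, hj, hjne⟩ := hall
    have hrhs : TS.pMat L lam i ν μ' μ = 0 := pzero ν μ' μ j hj hjne
    simp only [smulMat, hrhs, mul_zero]
    unfold TensorSystem.mulMat
    apply finsum_mem_eq_zero_of_forall_eq_zero
    intro x hx
    by_cases hxj : x j = μ' j
    · rw [pzero ν' x μ j hj (by rw [hxj]; exact hjne), mul_zero]
    · rw [pzero ν μ' x j hj hxj, zero_mul]
end
end

section
/- In a multiplicity-free semi-simple tensor system over a commutative ring R, for any L-tuple λ̃ = (λ_1,…,λ_L), any ν_1, ν_2, ν_3 ∈ I, any 1 ≤ i ≤ L−2, and any μ, μ''' ∈ B_{λ̃}, the triple product of projection operators has matrix elements ⟨μ'''| p_i^{(ν_3)} p_{i+1}^{(ν_2)} p_i^{(ν_1)} |μ⟩ = Σ_{υ∈I} (Π_{j≠i,i+1} δ_{μ_j}^{μ_j'''}) (F^{λ_iλ_{i+1}λ_{i+2}}_{υ})^{ν_1}_{ν_2} (F̄^{λ_iλ_{i+1}λ_{i+2}}_{υ})^{ν_2}_{ν_3} (F̄^{μ_{i-1}λ_iλ_{i+1}}_{μ_{i+1}'''})^{ν_3}_{μ_i'''}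 (F^{μ_{i-1}λ_iλ_{i+1}}_{μ_{i+1}})^{μ_i}_{ν_1} (F^{μ_{i-1}ν_1λ_{i+2}}_{μ_{i+2}})^{μ_{i+1}}_{υ} (F̄^{μ_{i-1}ν_3λ_{i+2}}_{μ_{i+2}})^{υ}_{μ_{i+1}'''}. -/
open scoped Classical
open Fin.NatCast

noncomputable section

section CoreLemmas

variable {R : Type*} [CommRing R] {I : Type*} (TS : TensorSystem R I)

private lemma N01 (a b c : I) : TS.N a b c = 0 ∨ TS.N a b c = 1 :=
  Nat.le_one_iff_eq_zero_or_eq_one.mp (TS.N_le_one a b c)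

private lemma F0_ab {a b e : I} (h : TS.N a b e = 0) (c d f : I) :
    TS.F a b c d e f = 0 := TS.F_vanish a b c d e f (by simp [h])

private lemma F0_bc {b c f : I} (h : TS.N b c f = 0) (a d e : I) :
    TS.F a b c d e f = 0 := TS.F_vanish a b c d e f (by simp [h])

private lemma F0_af {a f d : I} (h : TS.N a f d = 0) (b c e : I) :
    TS.F a b c d e f = 0 := TS.F_vanish a b c d e f (by simp [h])

private lemma F0_ec {e c d : I} (h : TS.N e c d = 0) (a b f : I) :
    TS.F a b c d e f = 0 := TS.F_vanish a b c d e f (by simp [h])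

private lemma Fb0_ab {a b e : I} (h : TS.N a b e = 0) (c d f : I) :
    TS.Fbar a b c d f e = 0 := TS.Fbar_vanish a b c d e f (by simp [h])

private lemma Fb0_bc {b c f : I} (h : TS.N b c f = 0) (a d e : I) :
    TS.Fbar a b c d f e = 0 := TS.Fbar_vanish a b c d e f (by simp [h])

private lemma Fb0_af {a f d : I} (h : TS.N a f d = 0) (b c e : I) :
    TS.Fbar a b c d f e = 0 := TS.Fbar_vanish a b c d e f (by simp [h])

private lemma Fb0_ec {e c d : I} (h : TS.N e c d = 0) (a b f : I) :
    TS.Fbar a b c d f e = 0 := TS.Fbar_vanish a b c d e f (by simp [h])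

/-- absorb an `N`-factor into a term that vanishes when `N = 0`. -/
private lemma absorbN {a b c : I} {X : R} (h0 : TS.N a b c = 0 → X = 0) :
    (TS.N a b c : R) * X = X := by
  rcases N01 TS a b c with h | h
  · rw [h, h0 h]; simp
  · rw [h]; simp

end CoreLemmas

section CoreLemmas2

variable {R : Type*} [CommRing R] {I : Type*} (TS : TensorSystem R I)

private lemma fsum_to_sum {s : Set I} (hs : s.Finite) (f : I → R)
    (h : ∀ x, f x ≠ 0 → x ∈ s) :
    ∑ᶠ x, f x = ∑ x ∈ hs.toFinset, f x := by
  apply finsum_eq_sum_of_support_subset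
  intro x hx
  simpa using h x hx

private lemma mem_Nsupp {a b x : I} (h : TS.N a b x ≠ 0) :
    x ∈ Function.support fun c => TS.N a b c := h

private lemma mem_Nfin {a b x : I} (h : TS.N a b x ≠ 0) :
    x ∈ (TS.N_finite a b).toFinset := by
  simpa [Function.mem_support] using h

/-- Lemma (*) : pentagon combined with `Fbar_F`. -/
private lemma star (A x y z E m g l k : I) :
    (∑ᶠ σ, TS.Fbar A x y g m σ * (TS.F σ y z E g l * TS.F A x l E σ k))
      = TS.F A m z E g k * TS.F x y z k m l := by
  classical
  set sσ := (TS.N_finite A x).toFinset with hsσ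
  set sh := (TS.N_finite x y).toFinset with hsh
  have h1 : (∑ᶠ σ, TS.Fbar A x y g m σ * (TS.F σ y z E g l * TS.F A x l E σ k))
      = ∑ σ ∈ sσ, TS.Fbar A x y g m σ * (TS.F σ y z E g l * TS.F A x l E σ k) := by
    apply fsum_to_sum
    intro σ hne
    refine mem_Nsupp TS fun h0 => ?_
    exact (left_ne_zero_of_mul hne) (Fb0_ab TS h0 _ _ _)
  rw [h1]
  have h2 : ∀ σ, TS.F σ y z E g l * TS.F A x l E σ k
      = ∑ h ∈ sh, TS.F A x y g σ h * TS.F A h z E g k * TS.F x y z k h l := by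
    intro σ
    rw [← TS.pentagon A x y z E σ g k l]
    apply fsum_to_sum
    intro h hne
    refine mem_Nsupp TS fun h0 => ?_
    exact (left_ne_zero_of_mul (left_ne_zero_of_mul hne)) (F0_bc TS h0 _ _ _)
  have h3 : (∑ σ ∈ sσ, TS.Fbar A x y g m σ * (TS.F σ y z E g l * TS.F A x l E σ k))
      = ∑ h ∈ sh, (∑ σ ∈ sσ, TS.Fbar A x y g m σ * TS.F A x y g σ h)
          * (TS.F A h z E g k * TS.F x y z k h l) := by
    simp only [h2, Finset.mul_sum, Finset.sum_mul]
    rw [Finset.sum_comm]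
    apply Finset.sum_congr rfl; intro h _
    apply Finset.sum_congr rfl; intro σ _
    ring
  rw [h3]
  have h4 : ∀ h, (∑ σ ∈ sσ, TS.Fbar A x y g m σ * TS.F A x y g σ h)
      = (if h = m then (1 : R) else 0) * (TS.N x y h : R) * (TS.N A h g : R) := by
    intro h
    rw [← TS.Fbar_F A x y g h m]
    symm
    apply fsum_to_sum
    intro σ hne
    refine mem_Nsupp TS fun h0 => ?_
    exact (left_ne_zero_of_mul hne) (Fb0_ab TS h0 _ _ _)
  simp only [h4]
  have h5 : ∀ h ∈ sh, (if h = m then (1 : R) else 0) * (TS.N x y h : R) * (TS.N A h g : R)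
        * (TS.F A h z E g k * TS.F x y z k h l)
      = if h = m then (TS.N x y h : R) * ((TS.N A h g : R)
          * (TS.F A h z E g k * TS.F x y z k h l)) else 0 := by
    intro h _
    split <;> ring
  rw [Finset.sum_congr rfl h5, Finset.sum_ite_eq' sh m
    (fun h => (TS.N x y h : R) * ((TS.N A h g : R) * (TS.F A h z E g k * TS.F x y z k h l)))]
  split
  · rw [absorbN TS (fun h0 => by rw [F0_ab TS h0, mul_zero, mul_zero]),
      absorbN TS (fun h0 => by rw [F0_ab TS h0, zero_mul])]
  · next hm =>
    have h0 : TS.N x y m = 0 := by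
      by_contra hne
      exact hm (mem_Nfin TS hne)
    rw [F0_ab TS h0, mul_zero]

end CoreLemmas2

section CoreLemmas3

variable {R : Type*} [CommRing R] {I : Type*} (TS : TensorSystem R I)

private lemma fsum_to_fin (s : Finset I) (f : I → R) (h : ∀ x, f x ≠ 0 → x ∈ s) :
    ∑ᶠ x, f x = ∑ x ∈ s, f x := by
  apply finsum_eq_sum_of_support_subset
  intro x hx
  exact h x hx

/-- Lemma (**). -/
private lemma star2 (A x y z E σ τ k ν₃ : I) :
    (∑ᶠ l, TS.F σ y z E τ l * TS.F A x l E σ k * TS.Fbar x y z k l ν₃)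
      = TS.F A x y τ σ ν₃ * TS.F A ν₃ z E τ k := by
  classical
  set sl := (TS.N_finite y z).toFinset with hsl
  set sh := (TS.N_finite x y).toFinset with hsh
  have h1 : (∑ᶠ l, TS.F σ y z E τ l * TS.F A x l E σ k * TS.Fbar x y z k l ν₃)
      = ∑ l ∈ sl, TS.F σ y z E τ l * TS.F A x l E σ k * TS.Fbar x y z k l ν₃ := by
    apply fsum_to_fin
    intro l hne
    refine mem_Nfin TS fun h0 => ?_
    exact (left_ne_zero_of_mul (left_ne_zero_of_mul hne)) (F0_bc TS h0 _ _ _)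
  rw [h1]
  have h2 : ∀ l, TS.F σ y z E τ l * TS.F A x l E σ k
      = ∑ h ∈ sh, TS.F A x y τ σ h * TS.F A h z E τ k * TS.F x y z k h l := by
    intro l
    rw [← TS.pentagon A x y z E σ τ k l]
    apply fsum_to_fin
    intro h hne
    refine mem_Nfin TS fun h0 => ?_
    exact (left_ne_zero_of_mul (left_ne_zero_of_mul hne)) (F0_bc TS h0 _ _ _)
  have h3 : (∑ l ∈ sl, TS.F σ y z E τ l * TS.F A x l E σ k * TS.Fbar x y z k l ν₃)
      = ∑ h ∈ sh, (TS.F A x y τ σ h * TS.F A h z E τ k)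
          * (∑ l ∈ sl, TS.F x y z k h l * TS.Fbar x y z k l ν₃) := by
    simp only [h2, Finset.sum_mul, Finset.mul_sum]
    rw [Finset.sum_comm]
    apply Finset.sum_congr rfl; intro h _
    apply Finset.sum_congr rfl; intro l _
    ring
  rw [h3]
  have h4 : ∀ h, (∑ l ∈ sl, TS.F x y z k h l * TS.Fbar x y z k l ν₃)
      = (if h = ν₃ then (1 : R) else 0) * (TS.N x y h : R) * (TS.N h z k : R) := by
    intro h
    rw [← TS.F_Fbar x y z k h ν₃]
    symm
    apply fsum_to_fin
    intro l hne
    refine mem_Nfin TS fun h0 => ?_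
    exact (left_ne_zero_of_mul hne) (F0_bc TS h0 _ _ _)
  simp only [h4]
  have h5 : ∀ h ∈ sh, TS.F A x y τ σ h * TS.F A h z E τ k
        * ((if h = ν₃ then (1 : R) else 0) * (TS.N x y h : R) * (TS.N h z k : R))
      = if h = ν₃ then (TS.N x y h : R) * ((TS.N h z k : R)
          * (TS.F A x y τ σ h * TS.F A h z E τ k)) else 0 := by
    intro h _
    split <;> ring
  rw [Finset.sum_congr rfl h5, Finset.sum_ite_eq' sh ν₃
    (fun h => (TS.N x y h : R) * ((TS.N h z k : R) * (TS.F A x y τ σ h * TS.F A h z E τ k)))]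
  split
  · rw [absorbN TS (fun h0 => by rw [F0_bc TS h0, zero_mul, mul_zero]),
      absorbN TS (fun h0 => by rw [F0_bc TS h0, mul_zero])]
  · next hm =>
    have h0 : TS.N x y ν₃ = 0 := by
      by_contra hne
      exact hm (mem_Nfin TS hne)
    rw [F0_bc TS h0, zero_mul]

/-- Lemma (***). -/
private lemma star3 (A x y z E σ k ν₂ ν₃ : I) :
    (∑ᶠ τ, TS.Fbar σ y z E ν₂ τ * (TS.F A x y τ σ ν₃ * TS.F A ν₃ z E τ k))
      = TS.F A x ν₂ E σ k * TS.Fbar x y z k ν₂ ν₃ := by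
  classical
  set st := (TS.N_finite σ y).toFinset with hst
  set sl := (TS.N_finite y z).toFinset with hsl
  have h1 : (∑ᶠ τ, TS.Fbar σ y z E ν₂ τ * (TS.F A x y τ σ ν₃ * TS.F A ν₃ z E τ k))
      = ∑ τ ∈ st, TS.Fbar σ y z E ν₂ τ * (TS.F A x y τ σ ν₃ * TS.F A ν₃ z E τ k) := by
    apply fsum_to_fin
    intro τ hne
    refine mem_Nfin TS fun h0 => ?_
    exact (left_ne_zero_of_mul hne) (Fb0_ab TS h0 _ _ _)
  rw [h1]
  have h2 : ∀ τ, TS.F A x y τ σ ν₃ * TS.F A ν₃ z E τ k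
      = ∑ l ∈ sl, TS.F σ y z E τ l * TS.F A x l E σ k * TS.Fbar x y z k l ν₃ := by
    intro τ
    rw [← star2 TS A x y z E σ τ k ν₃]
    apply fsum_to_fin
    intro l hne
    refine mem_Nfin TS fun h0 => ?_
    exact (left_ne_zero_of_mul (left_ne_zero_of_mul hne)) (F0_bc TS h0 _ _ _)
  have h3 : (∑ τ ∈ st, TS.Fbar σ y z E ν₂ τ * (TS.F A x y τ σ ν₃ * TS.F A ν₃ z E τ k))
      = ∑ l ∈ sl, (∑ τ ∈ st, TS.Fbar σ y z E ν₂ τ * TS.F σ y z E τ l)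
          * (TS.F A x l E σ k * TS.Fbar x y z k l ν₃) := by
    simp only [h2, Finset.mul_sum, Finset.sum_mul]
    rw [Finset.sum_comm]
    apply Finset.sum_congr rfl; intro l _
    apply Finset.sum_congr rfl; intro τ _
    ring
  rw [h3]
  have h4 : ∀ l, (∑ τ ∈ st, TS.Fbar σ y z E ν₂ τ * TS.F σ y z E τ l)
      = (if l = ν₂ then (1 : R) else 0) * (TS.N y z l : R) * (TS.N σ l E : R) := by
    intro l
    rw [← TS.Fbar_F σ y z E l ν₂]
    symm
    apply fsum_to_fin
    intro τ hne
    refine mem_Nfin TS fun h0 => ?_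
    exact (left_ne_zero_of_mul hne) (Fb0_ab TS h0 _ _ _)
  simp only [h4]
  have h5 : ∀ l ∈ sl, (if l = ν₂ then (1 : R) else 0) * (TS.N y z l : R) * (TS.N σ l E : R)
        * (TS.F A x l E σ k * TS.Fbar x y z k l ν₃)
      = if l = ν₂ then (TS.N y z l : R) * ((TS.N σ l E : R)
          * (TS.F A x l E σ k * TS.Fbar x y z k l ν₃)) else 0 := by
    intro l _
    split <;> ring
  rw [Finset.sum_congr rfl h5, Finset.sum_ite_eq' sl ν₂
    (fun l => (TS.N y z l : R) * ((TS.N σ l E : R) * (TS.F A x l E σ k * TS.Fbar x y z k l ν₃)))]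
  split
  · rw [absorbN TS (fun h0 => by rw [Fb0_bc TS h0, mul_zero, mul_zero]),
      absorbN TS (fun h0 => by rw [F0_ec TS h0, zero_mul])]
  · next hm =>
    have h0 : TS.N y z ν₂ = 0 := by
      by_contra hne
      exact hm (mem_Nfin TS hne)
    rw [Fb0_bc TS h0, mul_zero]

/-- Lemma (C). -/
private lemma starC (A x y z E σ τ ν₂ ν₃ : I) :
    (∑ᶠ k, TS.F A x ν₂ E σ k * TS.Fbar x y z k ν₂ ν₃ * TS.Fbar A ν₃ z E k τ)
      = TS.Fbar σ y z E ν₂ τ * TS.F A x y τ σ ν₃ := by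
  classical
  set sk := (TS.N_finite x ν₂).toFinset ∪ (TS.N_finite ν₃ z).toFinset with hsk
  set st := (TS.N_finite σ y).toFinset with hst
  have h1 : (∑ᶠ k, TS.F A x ν₂ E σ k * TS.Fbar x y z k ν₂ ν₃ * TS.Fbar A ν₃ z E k τ)
      = ∑ k ∈ sk, TS.F A x ν₂ E σ k * TS.Fbar x y z k ν₂ ν₃ * TS.Fbar A ν₃ z E k τ := by
    apply fsum_to_fin
    intro k hne
    refine Finset.mem_union_left _ (mem_Nfin TS fun h0 => ?_)
    exact (left_ne_zero_of_mul (left_ne_zero_of_mul hne)) (F0_bc TS h0 _ _ _)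
  rw [h1]
  have h2 : ∀ k, TS.F A x ν₂ E σ k * TS.Fbar x y z k ν₂ ν₃
      = ∑ τ' ∈ st, TS.Fbar σ y z E ν₂ τ' * (TS.F A x y τ' σ ν₃ * TS.F A ν₃ z E τ' k) := by
    intro k
    rw [← star3 TS A x y z E σ k ν₂ ν₃]
    apply fsum_to_fin
    intro τ' hne
    refine mem_Nfin TS fun h0 => ?_
    exact (left_ne_zero_of_mul hne) (Fb0_ab TS h0 _ _ _)
  have h3 : (∑ k ∈ sk, TS.F A x ν₂ E σ k * TS.Fbar x y z k ν₂ ν₃ * TS.Fbar A ν₃ z E k τ)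
      = ∑ τ' ∈ st, (TS.Fbar σ y z E ν₂ τ' * TS.F A x y τ' σ ν₃)
          * (∑ k ∈ sk, TS.F A ν₃ z E τ' k * TS.Fbar A ν₃ z E k τ) := by
    simp only [h2, Finset.sum_mul, Finset.mul_sum]
    rw [Finset.sum_comm]
    apply Finset.sum_congr rfl; intro τ' _
    apply Finset.sum_congr rfl; intro k _
    ring
  rw [h3]
  have h4 : ∀ τ', (∑ k ∈ sk, TS.F A ν₃ z E τ' k * TS.Fbar A ν₃ z E k τ)
      = (if τ' = τ then (1 : R) else 0) * (TS.N A ν₃ τ' : R) * (TS.N τ' z E : R) := by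
    intro τ'
    rw [← TS.F_Fbar A ν₃ z E τ' τ]
    symm
    apply fsum_to_fin
    intro k hne
    refine Finset.mem_union_right _ (mem_Nfin TS fun h0 => ?_)
    exact (left_ne_zero_of_mul hne) (F0_bc TS h0 _ _ _)
  simp only [h4]
  have h5 : ∀ τ' ∈ st, TS.Fbar σ y z E ν₂ τ' * TS.F A x y τ' σ ν₃
        * ((if τ' = τ then (1 : R) else 0) * (TS.N A ν₃ τ' : R) * (TS.N τ' z E : R))
      = if τ' = τ then (TS.N A ν₃ τ' : R) * ((TS.N τ' z E : R)
          * (TS.Fbar σ y z E ν₂ τ' * TS.F A x y τ' σ ν₃)) else 0 := by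
    intro τ' _
    split <;> ring
  rw [Finset.sum_congr rfl h5, Finset.sum_ite_eq' st τ
    (fun τ' => (TS.N A ν₃ τ' : R) * ((TS.N τ' z E : R)
      * (TS.Fbar σ y z E ν₂ τ' * TS.F A x y τ' σ ν₃)))]
  split
  · rw [absorbN TS (fun h0 => by rw [F0_af TS h0, mul_zero, mul_zero]),
      absorbN TS (fun h0 => by rw [Fb0_ec TS h0, zero_mul])]
  · next hm =>
    have h0 : TS.N σ y τ = 0 := by
      by_contra hne
      exact hm (mem_Nfin TS hne)
    rw [Fb0_ab TS h0, zero_mul]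

/-- The core scalar identity `S = T`. -/
private lemma coreST (A x y z E b τ ν₁ ν₂ ν₃ : I) :
    (∑ᶠ σ, TS.F A x y τ σ ν₃ * TS.Fbar σ y z E ν₂ τ
        * (TS.F σ y z E b ν₂ * TS.Fbar A x y b ν₁ σ))
      = ∑ᶠ υ, TS.F x y z υ ν₁ ν₂ * TS.Fbar x y z υ ν₂ ν₃
        * (TS.F A ν₁ z E b υ * TS.Fbar A ν₃ z E υ τ) := by
  classical
  set sσ := (TS.N_finite A x).toFinset with hsσ
  set sυ := (TS.N_finite ν₁ z).toFinset ∪ (TS.N_finite x ν₂).toFinset with hsυ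
  have hT : (∑ᶠ υ, TS.F x y z υ ν₁ ν₂ * TS.Fbar x y z υ ν₂ ν₃
        * (TS.F A ν₁ z E b υ * TS.Fbar A ν₃ z E υ τ))
      = ∑ υ ∈ sυ, TS.F x y z υ ν₁ ν₂ * TS.Fbar x y z υ ν₂ ν₃
        * (TS.F A ν₁ z E b υ * TS.Fbar A ν₃ z E υ τ) := by
    apply fsum_to_fin
    intro υ hne
    refine Finset.mem_union_left _ (mem_Nfin TS fun h0 => ?_)
    have : TS.F A ν₁ z E b υ ≠ 0 :=
      left_ne_zero_of_mul (right_ne_zero_of_mul hne)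
    exact this (F0_bc TS h0 _ _ _)
  rw [hT]
  have h2 : ∀ υ, TS.F A ν₁ z E b υ * TS.F x y z υ ν₁ ν₂
      = ∑ σ ∈ sσ, TS.Fbar A x y b ν₁ σ * (TS.F σ y z E b ν₂ * TS.F A x ν₂ E σ υ) := by
    intro υ
    rw [← star TS A x y z E ν₁ b ν₂ υ]
    apply fsum_to_fin
    intro σ hne
    refine mem_Nfin TS fun h0 => ?_
    exact (left_ne_zero_of_mul hne) (Fb0_ab TS h0 _ _ _)
  have h3 : (∑ υ ∈ sυ, TS.F x y z υ ν₁ ν₂ * TS.Fbar x y z υ ν₂ ν₃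
        * (TS.F A ν₁ z E b υ * TS.Fbar A ν₃ z E υ τ))
      = ∑ σ ∈ sσ, (TS.Fbar A x y b ν₁ σ * TS.F σ y z E b ν₂)
          * (∑ υ ∈ sυ, TS.F A x ν₂ E σ υ * TS.Fbar x y z υ ν₂ ν₃ * TS.Fbar A ν₃ z E υ τ) := by
    have hterm : ∀ υ, TS.F x y z υ ν₁ ν₂ * TS.Fbar x y z υ ν₂ ν₃
        * (TS.F A ν₁ z E b υ * TS.Fbar A ν₃ z E υ τ)
      = (TS.F A ν₁ z E b υ * TS.F x y z υ ν₁ ν₂)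
        * (TS.Fbar x y z υ ν₂ ν₃ * TS.Fbar A ν₃ z E υ τ) := by
      intro υ; ring
    simp only [hterm, h2, Finset.sum_mul, Finset.mul_sum]
    rw [Finset.sum_comm]
    apply Finset.sum_congr rfl; intro σ _
    apply Finset.sum_congr rfl; intro υ _
    ring
  rw [h3]
  have h4 : ∀ σ, (∑ υ ∈ sυ, TS.F A x ν₂ E σ υ * TS.Fbar x y z υ ν₂ ν₃ * TS.Fbar A ν₃ z E υ τ)
      = TS.Fbar σ y z E ν₂ τ * TS.F A x y τ σ ν₃ := by
    intro σ
    rw [← starC TS A x y z E σ τ ν₂ ν₃]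
    symm
    apply fsum_to_fin
    intro υ hne
    refine Finset.mem_union_right _ (mem_Nfin TS fun h0 => ?_)
    exact (left_ne_zero_of_mul (left_ne_zero_of_mul hne)) (F0_bc TS h0 _ _ _)
  simp only [h4]
  have hS : (∑ᶠ σ, TS.F A x y τ σ ν₃ * TS.Fbar σ y z E ν₂ τ
        * (TS.F σ y z E b ν₂ * TS.Fbar A x y b ν₁ σ))
      = ∑ σ ∈ sσ, TS.F A x y τ σ ν₃ * TS.Fbar σ y z E ν₂ τ
        * (TS.F σ y z E b ν₂ * TS.Fbar A x y b ν₁ σ) := by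
    apply fsum_to_fin
    intro σ hne
    refine mem_Nfin TS fun h0 => ?_
    exact (right_ne_zero_of_mul (right_ne_zero_of_mul hne)) (Fb0_ab TS h0 _ _ _)
  rw [hS]
  apply Finset.sum_congr rfl; intro σ _
  ring

end CoreLemmas3

section GlueLemmas

variable {R : Type*} [CommRing R] {I : Type*} (TS : TensorSystem R I)

private lemma Neq1_of_ne {a b c : I} (h : TS.N a b c ≠ 0) : TS.N a b c = 1 :=
  (N01 TS a b c).resolve_left h

private lemma collapse {α : Type*} (S : Set α) (g : α → R) (u : I → α)
    (hu : Function.Injective u)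
    (h0 : ∀ p, g p ≠ 0 → p ∈ S ∧ ∃ σ, p = u σ) :
    (∑ᶠ p ∈ S, g p) = ∑ᶠ σ, g (u σ) := by
  have hsupp : Function.support g ⊆ S := fun p hp => (h0 p hp).1
  have hrange : Function.support g ⊆ Set.range u := by
    intro p hp
    obtain ⟨σ, hσ⟩ := (h0 p hp).2
    exact ⟨σ, hσ.symm⟩
  rw [finsum_mem_def, Set.indicator_eq_self.mpr hsupp]
  rw [← finsum_mem_range hu, finsum_mem_def, Set.indicator_eq_self.mpr hrange]

private lemma update_inj {α β : Type*} [DecidableEq α] (f : α → β) (c : α) :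
    Function.Injective (fun v => Function.update f c v) := by
  intro a b h
  have := congrFun h c
  simpa using this

private lemma delta_forces {L : ℕ} {c : Fin (L + 1)} {μ μ' : Fin (L + 1) → I}
    (h : (∏ j ∈ Finset.univ.erase c, if μ j = μ' j then (1 : R) else 0) ≠ 0) :
    ∀ j, j ≠ c → μ j = μ' j := by
  intro j hj
  by_contra hne
  exact h (Finset.prod_eq_zero (Finset.mem_erase.mpr ⟨hj, Finset.mem_univ j⟩) (if_neg hne))

private lemma delta_one {L : ℕ} {c : Fin (L + 1)} {μ μ' : Fin (L + 1) → I}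
    (h : ∀ j, j ≠ c → μ j = μ' j) :
    (∏ j ∈ Finset.univ.erase c, if μ j = μ' j then (1 : R) else 0) = 1 :=
  Finset.prod_eq_one fun j hj => if_pos (h j (Finset.mem_erase.mp hj).1)

private lemma natCast_fin_val {L n : ℕ} (h : n ≤ L) : (((n : ℕ) : Fin (L + 1)) : ℕ) = n := by
  simp [Fin.val_natCast, Nat.mod_eq_of_lt (Nat.lt_succ_of_le h)]

private lemma natCast_fin_ne {L n m : ℕ} (hn : n ≤ L) (hm : m ≤ L) (h : n ≠ m) :
    ((n : ℕ) : Fin (L + 1)) ≠ ((m : ℕ) : Fin (L + 1)) := by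
  intro he
  exact h (by
    have := congrArg Fin.val he
    rwa [natCast_fin_val hn, natCast_fin_val hm] at this)

private lemma isPath_update {L : ℕ} {I0 : Set I} {lam : ℕ → I} {μ : Fin (L + 1) → I}
    (hμ : TS.IsPath L I0 lam μ) {i : ℕ} (hi : 1 ≤ i) (hiL : i + 1 ≤ L) (σ : I)
    (h1 : TS.N (μ ((i - 1 : ℕ) : Fin (L + 1))) (lam i) σ = 1)
    (h2 : TS.N σ (lam (i + 1)) (μ ((i + 1 : ℕ) : Fin (L + 1))) = 1) :
    TS.IsPath L I0 lam (Function.update μ ((i : ℕ) : Fin (L + 1)) σ) := by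
  have hiL' : i ≤ L := by omega
  constructor
  · have h0 : (0 : Fin (L + 1)) ≠ ((i : ℕ) : Fin (L + 1)) := by
      have : ((0 : ℕ) : Fin (L + 1)) ≠ ((i : ℕ) : Fin (L + 1)) :=
        natCast_fin_ne (by omega) hiL' (by omega)
      simpa using this
    rw [Function.update_of_ne h0]
    exact hμ.1
  · intro j hj1 hjL
    rcases eq_or_ne j i with rfl | hji
    · rw [Function.update_of_ne (natCast_fin_ne (by omega) hiL' (by omega)),
        Function.update_self]
      exact h1
    · rcases eq_or_ne j (i + 1) with rfl | hji1
      · have : (i + 1 - 1 : ℕ) = i := by omega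
        rw [this, Function.update_self,
          Function.update_of_ne (natCast_fin_ne (by omega) hiL' (by omega))]
        exact h2
      · rw [Function.update_of_ne (natCast_fin_ne (by omega) hiL' (by omega)),
          Function.update_of_ne (natCast_fin_ne (by omega) hiL' (by omega))]
        exact hμ.2 j hj1 hjL

end GlueLemmas

/-- matrix elements of `p_i^{(ν₃)} p_{i+1}^{(ν₂)} p_i^{(ν₁)}`. -/
theorem triple_product_matrix_elements_up
    {R : Type*} [CommRing R] {I : Type*}
    (TS : TensorSystem R I) (L : ℕ) (I0 : Set I) (hI0 : I0.Finite)
    (lam : ℕ → I) (ν₁ ν₂ ν₃ : I) (i : ℕ) (hi : 1 ≤ i) (hiL : i + 2 ≤ L)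
    (μ μ''' : Fin (L + 1) → I)
    (hμ : TS.IsPath L I0 lam μ) (hμ''' : TS.IsPath L I0 lam μ''') :
    TS.mulMat L I0 lam (TS.pMat L lam i ν₃)
      (TS.mulMat L I0 lam (TS.pMat L lam (i + 1) ν₂) (TS.pMat L lam i ν₁)) μ''' μ
    = ∑ᶠ υ : I,
      ((∏ j ∈ (Finset.univ.erase ((i : ℕ) : Fin (L + 1))).erase ((i + 1 : ℕ) : Fin (L + 1)),
          if μ j = μ''' j then (1 : R) else 0)
        * TS.F (lam i) (lam (i + 1)) (lam (i + 2)) υ ν₁ ν₂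
        * TS.Fbar (lam i) (lam (i + 1)) (lam (i + 2)) υ ν₂ ν₃
        * TS.Fbar (μ ((i - 1 : ℕ) : Fin (L + 1))) (lam i) (lam (i + 1)) (μ''' ((i + 1 : ℕ) : Fin (L + 1))) ν₃ (μ''' ((i : ℕ) : Fin (L + 1)))
        * TS.F (μ ((i - 1 : ℕ) : Fin (L + 1))) (lam i) (lam (i + 1)) (μ ((i + 1 : ℕ) : Fin (L + 1))) (μ ((i : ℕ) : Fin (L + 1))) ν₁
        * TS.F (μ ((i - 1 : ℕ) : Fin (L + 1))) ν₁ (lam (i + 2)) (μ ((i + 2 : ℕ) : Fin (L + 1))) (μ ((i + 1 : ℕ) : Fin (L + 1))) υ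
        * TS.Fbar (μ ((i - 1 : ℕ) : Fin (L + 1))) ν₃ (lam (i + 2)) (μ ((i + 2 : ℕ) : Fin (L + 1))) υ (μ''' ((i + 1 : ℕ) : Fin (L + 1)))) := by
  classical
  have hiL0 : i ≤ L := by omega
  have hi0L : i - 1 ≤ L := by omega
  have hi1L : i + 1 ≤ L := by omega
  have hi2L : i + 2 ≤ L := by omega
  have d01 : ((i - 1 : ℕ) : Fin (L + 1)) ≠ ((i : ℕ) : Fin (L + 1)) :=
    natCast_fin_ne hi0L hiL0 (by omega)
  have d02 : ((i - 1 : ℕ) : Fin (L + 1)) ≠ ((i + 1 : ℕ) : Fin (L + 1)) :=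
    natCast_fin_ne hi0L hi1L (by omega)
  have d21 : ((i + 1 : ℕ) : Fin (L + 1)) ≠ ((i : ℕ) : Fin (L + 1)) :=
    natCast_fin_ne hi1L hiL0 (by omega)
  have d12 : ((i : ℕ) : Fin (L + 1)) ≠ ((i + 1 : ℕ) : Fin (L + 1)) := d21.symm
  have d31 : ((i + 2 : ℕ) : Fin (L + 1)) ≠ ((i : ℕ) : Fin (L + 1)) :=
    natCast_fin_ne hi2L hiL0 (by omega)
  have d32 : ((i + 2 : ℕ) : Fin (L + 1)) ≠ ((i + 1 : ℕ) : Fin (L + 1)) :=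
    natCast_fin_ne hi2L hi1L (by omega)
  -- Step A : collapse the outer sum
  have hA : ∀ w : Fin (L + 1) → I,
      (TS.pMat L lam i ν₃ μ''' w
        * TS.mulMat L I0 lam (TS.pMat L lam (i + 1) ν₂) (TS.pMat L lam i ν₁) w μ) ≠ 0 →
      w ∈ {x : Fin (L + 1) → I | TS.IsPath L I0 lam x}
        ∧ ∃ s, w = Function.update μ''' ((i : ℕ) : Fin (L + 1)) s := by
    intro w hw
    have hP3 : TS.pMat L lam i ν₃ μ''' w ≠ 0 := left_ne_zero_of_mul hw
    rw [TensorSystem.pMat] at hP3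
    have hd := left_ne_zero_of_mul (left_ne_zero_of_mul hP3)
    have hF := right_ne_zero_of_mul hP3
    have hwj : ∀ j, j ≠ ((i : ℕ) : Fin (L + 1)) → w j = μ''' j := delta_forces hd
    have hN1 : TS.N (w ((i - 1 : ℕ) : Fin (L + 1))) (lam i) (w ((i : ℕ) : Fin (L + 1))) = 1 :=
      Neq1_of_ne TS fun h0 => hF (F0_ab TS h0 _ _ _)
    have hN2 : TS.N (w ((i : ℕ) : Fin (L + 1))) (lam (i + 1)) (w ((i + 1 : ℕ) : Fin (L + 1))) = 1 :=
      Neq1_of_ne TS fun h0 => hF (F0_ec TS h0 _ _ _)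
    have hupd : w = Function.update μ''' ((i : ℕ) : Fin (L + 1)) (w ((i : ℕ) : Fin (L + 1))) := by
      funext j
      rcases eq_or_ne j ((i : ℕ) : Fin (L + 1)) with rfl | hj
      · rw [Function.update_self]
      · rw [Function.update_of_ne hj]
        exact hwj j hj
    refine ⟨?_, ⟨w ((i : ℕ) : Fin (L + 1)), hupd⟩⟩
    show TS.IsPath L I0 lam w
    rw [hwj _ d01] at hN1
    rw [hwj _ d21] at hN2
    rw [hupd]
    exact isPath_update TS hμ''' hi hi1L _ hN1 hN2
  -- Step B : collapse the inner sum
  have hB : ∀ w : Fin (L + 1) → I,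
      TS.mulMat L I0 lam (TS.pMat L lam (i + 1) ν₂) (TS.pMat L lam i ν₁) w μ
        = ∑ᶠ σ, TS.pMat L lam (i + 1) ν₂ w (Function.update μ ((i : ℕ) : Fin (L + 1)) σ)
            * TS.pMat L lam i ν₁ (Function.update μ ((i : ℕ) : Fin (L + 1)) σ) μ := by
    intro w
    rw [TensorSystem.mulMat]
    refine collapse _ _ _ (update_inj μ _) ?_
    intro p hp
    have hP1 : TS.pMat L lam i ν₁ p μ ≠ 0 := right_ne_zero_of_mul hp
    rw [TensorSystem.pMat] at hP1
    have hd := left_ne_zero_of_mul (left_ne_zero_of_mul hP1)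
    have hFb := right_ne_zero_of_mul (left_ne_zero_of_mul hP1)
    have hpj : ∀ j, j ≠ ((i : ℕ) : Fin (L + 1)) → μ j = p j := delta_forces hd
    have hN1 : TS.N (μ ((i - 1 : ℕ) : Fin (L + 1))) (lam i) (p ((i : ℕ) : Fin (L + 1))) = 1 :=
      Neq1_of_ne TS fun h0 => hFb (Fb0_ab TS h0 _ _ _)
    have hN2 : TS.N (p ((i : ℕ) : Fin (L + 1))) (lam (i + 1)) (μ ((i + 1 : ℕ) : Fin (L + 1))) = 1 :=
      Neq1_of_ne TS fun h0 => hFb (Fb0_ec TS h0 _ _ _)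
    have hupd : p = Function.update μ ((i : ℕ) : Fin (L + 1)) (p ((i : ℕ) : Fin (L + 1))) := by
      funext j
      rcases eq_or_ne j ((i : ℕ) : Fin (L + 1)) with rfl | hj
      · rw [Function.update_self]
      · rw [Function.update_of_ne hj]
        exact (hpj j hj).symm
    refine ⟨?_, ⟨p ((i : ℕ) : Fin (L + 1)), hupd⟩⟩
    show TS.IsPath L I0 lam p
    rw [hupd]
    exact isPath_update TS hμ hi hi1L _ hN1 hN2
  rw [TensorSystem.mulMat,
    collapse {x : Fin (L + 1) → I | TS.IsPath L I0 lam x}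
      (fun w => TS.pMat L lam i ν₃ μ''' w
        * TS.mulMat L I0 lam (TS.pMat L lam (i + 1) ν₂) (TS.pMat L lam i ν₁) w μ)
      (fun s => Function.update μ''' ((i : ℕ) : Fin (L + 1)) s)
      (update_inj μ''' _) hA]
  simp only [hB]
  -- case split on whether the spectator coordinates agree
  by_cases hcase : ∀ j : Fin (L + 1), j ≠ ((i : ℕ) : Fin (L + 1)) →
      j ≠ ((i + 1 : ℕ) : Fin (L + 1)) → μ j = μ''' j
  · -- main case
    have hm0 : μ ((i - 1 : ℕ) : Fin (L + 1)) = μ''' ((i - 1 : ℕ) : Fin (L + 1)) :=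
      hcase _ d01 d02
    have eP3 : ∀ s : I, TS.pMat L lam i ν₃ μ''' (Function.update μ''' ((i : ℕ) : Fin (L + 1)) s)
        = TS.Fbar (μ ((i - 1 : ℕ) : Fin (L + 1))) (lam i) (lam (i + 1))
            (μ''' ((i + 1 : ℕ) : Fin (L + 1))) ν₃ (μ''' ((i : ℕ) : Fin (L + 1)))
          * TS.F (μ ((i - 1 : ℕ) : Fin (L + 1))) (lam i) (lam (i + 1))
            (μ''' ((i + 1 : ℕ) : Fin (L + 1))) s ν₃ := by
      intro s
      rw [TensorSystem.pMat]
      rw [delta_one (fun j hj => Function.update_of_ne hj s μ''')]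
      rw [Function.update_of_ne d01, Function.update_of_ne d21, Function.update_self, one_mul,
        ← hm0]
    have eP1 : ∀ σ : I, TS.pMat L lam i ν₁ (Function.update μ ((i : ℕ) : Fin (L + 1)) σ) μ
        = TS.Fbar (μ ((i - 1 : ℕ) : Fin (L + 1))) (lam i) (lam (i + 1))
            (μ ((i + 1 : ℕ) : Fin (L + 1))) ν₁ σ
          * TS.F (μ ((i - 1 : ℕ) : Fin (L + 1))) (lam i) (lam (i + 1))
            (μ ((i + 1 : ℕ) : Fin (L + 1))) (μ ((i : ℕ) : Fin (L + 1))) ν₁ := by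
      intro σ
      rw [TensorSystem.pMat]
      rw [delta_one (fun j hj => (Function.update_of_ne hj σ μ).symm), Function.update_self,
        one_mul]
    have eP2 : ∀ s σ : I, TS.pMat L lam (i + 1) ν₂
          (Function.update μ''' ((i : ℕ) : Fin (L + 1)) s)
          (Function.update μ ((i : ℕ) : Fin (L + 1)) σ)
        = (if σ = s then (1 : R) else 0)
          * TS.Fbar σ (lam (i + 1)) (lam (i + 2)) (μ ((i + 2 : ℕ) : Fin (L + 1))) ν₂
              (μ''' ((i + 1 : ℕ) : Fin (L + 1)))
          * TS.F σ (lam (i + 1)) (lam (i + 2)) (μ ((i + 2 : ℕ) : Fin (L + 1)))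
              (μ ((i + 1 : ℕ) : Fin (L + 1))) ν₂ := by
      intro s σ
      rw [TensorSystem.pMat]
      rw [show i + 1 - 1 = i from rfl, show i + 1 + 1 = i + 2 from rfl]
      have hdelta : (∏ j ∈ Finset.univ.erase ((i + 1 : ℕ) : Fin (L + 1)),
            if (Function.update μ ((i : ℕ) : Fin (L + 1)) σ) j
              = (Function.update μ''' ((i : ℕ) : Fin (L + 1)) s) j then (1 : R) else 0)
          = if σ = s then 1 else 0 := by
        rw [← Finset.mul_prod_erase _ _
          (Finset.mem_erase.mpr ⟨d12, Finset.mem_univ ((i : ℕ) : Fin (L + 1))⟩)]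
        have hrest : (∏ j ∈ (Finset.univ.erase ((i + 1 : ℕ) : Fin (L + 1))).erase
              ((i : ℕ) : Fin (L + 1)),
            if (Function.update μ ((i : ℕ) : Fin (L + 1)) σ) j
              = (Function.update μ''' ((i : ℕ) : Fin (L + 1)) s) j then (1 : R) else 0) = 1 := by
          refine Finset.prod_eq_one fun j hj => ?_
          obtain ⟨hj1, hj'⟩ := Finset.mem_erase.mp hj
          obtain ⟨hj2, _⟩ := Finset.mem_erase.mp hj'
          rw [Function.update_of_ne hj1, Function.update_of_ne hj1, if_pos (hcase j hj1 hj2)]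
        rw [Function.update_self, Function.update_self, hrest, mul_one]
      rw [hdelta, Function.update_self, Function.update_of_ne d31, Function.update_of_ne d21,
        Function.update_of_ne d21]
    have hLHS : (∑ᶠ s, TS.pMat L lam i ν₃ μ''' (Function.update μ''' ((i : ℕ) : Fin (L + 1)) s)
          * ∑ᶠ σ, TS.pMat L lam (i + 1) ν₂ (Function.update μ''' ((i : ℕ) : Fin (L + 1)) s)
              (Function.update μ ((i : ℕ) : Fin (L + 1)) σ)
            * TS.pMat L lam i ν₁ (Function.update μ ((i : ℕ) : Fin (L + 1)) σ) μ)
        = ∑ᶠ s, (TS.Fbar (μ ((i - 1 : ℕ) : Fin (L + 1))) (lam i) (lam (i + 1))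
              (μ''' ((i + 1 : ℕ) : Fin (L + 1))) ν₃ (μ''' ((i : ℕ) : Fin (L + 1)))
            * TS.F (μ ((i - 1 : ℕ) : Fin (L + 1))) (lam i) (lam (i + 1))
              (μ ((i + 1 : ℕ) : Fin (L + 1))) (μ ((i : ℕ) : Fin (L + 1))) ν₁)
          * (TS.F (μ ((i - 1 : ℕ) : Fin (L + 1))) (lam i) (lam (i + 1))
                (μ''' ((i + 1 : ℕ) : Fin (L + 1))) s ν₃
              * TS.Fbar s (lam (i + 1)) (lam (i + 2)) (μ ((i + 2 : ℕ) : Fin (L + 1))) ν₂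
                (μ''' ((i + 1 : ℕ) : Fin (L + 1)))
              * (TS.F s (lam (i + 1)) (lam (i + 2)) (μ ((i + 2 : ℕ) : Fin (L + 1)))
                  (μ ((i + 1 : ℕ) : Fin (L + 1))) ν₂
                * TS.Fbar (μ ((i - 1 : ℕ) : Fin (L + 1))) (lam i) (lam (i + 1))
                  (μ ((i + 1 : ℕ) : Fin (L + 1))) ν₁ s)) := by
      apply finsum_congr
      intro s
      rw [eP3 s]
      have hinner : (∑ᶠ σ, TS.pMat L lam (i + 1) ν₂
            (Function.update μ''' ((i : ℕ) : Fin (L + 1)) s)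
            (Function.update μ ((i : ℕ) : Fin (L + 1)) σ)
          * TS.pMat L lam i ν₁ (Function.update μ ((i : ℕ) : Fin (L + 1)) σ) μ)
          = TS.Fbar s (lam (i + 1)) (lam (i + 2)) (μ ((i + 2 : ℕ) : Fin (L + 1))) ν₂
              (μ''' ((i + 1 : ℕ) : Fin (L + 1)))
            * TS.F s (lam (i + 1)) (lam (i + 2)) (μ ((i + 2 : ℕ) : Fin (L + 1)))
              (μ ((i + 1 : ℕ) : Fin (L + 1))) ν₂
            * (TS.Fbar (μ ((i - 1 : ℕ) : Fin (L + 1))) (lam i) (lam (i + 1))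
                (μ ((i + 1 : ℕ) : Fin (L + 1))) ν₁ s
              * TS.F (μ ((i - 1 : ℕ) : Fin (L + 1))) (lam i) (lam (i + 1))
                (μ ((i + 1 : ℕ) : Fin (L + 1))) (μ ((i : ℕ) : Fin (L + 1))) ν₁) := by
        have h1 : ∀ σ : I, TS.pMat L lam (i + 1) ν₂
              (Function.update μ''' ((i : ℕ) : Fin (L + 1)) s)
              (Function.update μ ((i : ℕ) : Fin (L + 1)) σ)
            * TS.pMat L lam i ν₁ (Function.update μ ((i : ℕ) : Fin (L + 1)) σ) μ
            = (if σ = s then (1 : R) else 0)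
              * (TS.Fbar σ (lam (i + 1)) (lam (i + 2)) (μ ((i + 2 : ℕ) : Fin (L + 1))) ν₂
                  (μ''' ((i + 1 : ℕ) : Fin (L + 1)))
                * TS.F σ (lam (i + 1)) (lam (i + 2)) (μ ((i + 2 : ℕ) : Fin (L + 1)))
                  (μ ((i + 1 : ℕ) : Fin (L + 1))) ν₂
                * (TS.Fbar (μ ((i - 1 : ℕ) : Fin (L + 1))) (lam i) (lam (i + 1))
                    (μ ((i + 1 : ℕ) : Fin (L + 1))) ν₁ σ
                  * TS.F (μ ((i - 1 : ℕ) : Fin (L + 1))) (lam i) (lam (i + 1))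
                    (μ ((i + 1 : ℕ) : Fin (L + 1))) (μ ((i : ℕ) : Fin (L + 1))) ν₁)) := by
          intro σ
          rw [eP2 s σ, eP1 σ]
          ring
        rw [finsum_congr h1, finsum_eq_single _ s
          (fun σ hσ => by rw [if_neg hσ, zero_mul]), if_pos rfl, one_mul]
      rw [hinner]
      ring
    rw [hLHS]
    have hfinS : (Function.support fun s =>
        TS.F (μ ((i - 1 : ℕ) : Fin (L + 1))) (lam i) (lam (i + 1))
            (μ''' ((i + 1 : ℕ) : Fin (L + 1))) s ν₃
          * TS.Fbar s (lam (i + 1)) (lam (i + 2)) (μ ((i + 2 : ℕ) : Fin (L + 1))) ν₂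
            (μ''' ((i + 1 : ℕ) : Fin (L + 1)))
          * (TS.F s (lam (i + 1)) (lam (i + 2)) (μ ((i + 2 : ℕ) : Fin (L + 1)))
              (μ ((i + 1 : ℕ) : Fin (L + 1))) ν₂
            * TS.Fbar (μ ((i - 1 : ℕ) : Fin (L + 1))) (lam i) (lam (i + 1))
              (μ ((i + 1 : ℕ) : Fin (L + 1))) ν₁ s)).Finite := by
      refine (TS.N_finite (μ ((i - 1 : ℕ) : Fin (L + 1))) (lam i)).subset ?_
      intro s hs
      refine mem_Nsupp TS fun h0 => hs ?_
      simp [Fb0_ab TS h0]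
    have hfinT : (Function.support fun υ =>
        TS.F (lam i) (lam (i + 1)) (lam (i + 2)) υ ν₁ ν₂
          * TS.Fbar (lam i) (lam (i + 1)) (lam (i + 2)) υ ν₂ ν₃
          * (TS.F (μ ((i - 1 : ℕ) : Fin (L + 1))) ν₁ (lam (i + 2))
              (μ ((i + 2 : ℕ) : Fin (L + 1))) (μ ((i + 1 : ℕ) : Fin (L + 1))) υ
            * TS.Fbar (μ ((i - 1 : ℕ) : Fin (L + 1))) ν₃ (lam (i + 2))
              (μ ((i + 2 : ℕ) : Fin (L + 1))) υ (μ''' ((i + 1 : ℕ) : Fin (L + 1))))).Finite := by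
      refine (TS.N_finite ν₁ (lam (i + 2))).subset ?_
      intro υ hυ
      refine mem_Nsupp TS fun h0 => hυ ?_
      simp [F0_bc TS h0]
    rw [← mul_finsum' _ _ hfinS,
      coreST TS (μ ((i - 1 : ℕ) : Fin (L + 1))) (lam i) (lam (i + 1)) (lam (i + 2))
        (μ ((i + 2 : ℕ) : Fin (L + 1))) (μ ((i + 1 : ℕ) : Fin (L + 1)))
        (μ''' ((i + 1 : ℕ) : Fin (L + 1))) ν₁ ν₂ ν₃,
      mul_finsum' _ _ hfinT]
    apply finsum_congr
    intro υ
    have hone : (∏ j ∈ (Finset.univ.erase ((i : ℕ) : Fin (L + 1))).erase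
          ((i + 1 : ℕ) : Fin (L + 1)), if μ j = μ''' j then (1 : R) else 0) = 1 := by
      refine Finset.prod_eq_one fun j hj => ?_
      obtain ⟨hj2, hj'⟩ := Finset.mem_erase.mp hj
      obtain ⟨hj1, _⟩ := Finset.mem_erase.mp hj'
      exact if_pos (hcase j hj1 hj2)
    rw [hone]
    ring
  · -- mismatch: both sides vanish
    push_neg at hcase
    obtain ⟨j0, hj01, hj02, hne⟩ := hcase
    have hj0mem : j0 ∈ (Finset.univ.erase ((i : ℕ) : Fin (L + 1))).erase
        ((i + 1 : ℕ) : Fin (L + 1)) :=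
      Finset.mem_erase.mpr ⟨hj02, Finset.mem_erase.mpr ⟨hj01, Finset.mem_univ _⟩⟩
    have hL0 : ∀ s : I, (TS.pMat L lam i ν₃ μ''' (Function.update μ''' ((i : ℕ) : Fin (L + 1)) s)
        * ∑ᶠ σ, TS.pMat L lam (i + 1) ν₂ (Function.update μ''' ((i : ℕ) : Fin (L + 1)) s)
            (Function.update μ ((i : ℕ) : Fin (L + 1)) σ)
          * TS.pMat L lam i ν₁ (Function.update μ ((i : ℕ) : Fin (L + 1)) σ) μ) = 0 := by
      intro s
      have hin : ∀ σ : I, (TS.pMat L lam (i + 1) ν₂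
            (Function.update μ''' ((i : ℕ) : Fin (L + 1)) s)
            (Function.update μ ((i : ℕ) : Fin (L + 1)) σ)
          * TS.pMat L lam i ν₁ (Function.update μ ((i : ℕ) : Fin (L + 1)) σ) μ) = 0 := by
        intro σ
        have hP2 : TS.pMat L lam (i + 1) ν₂
            (Function.update μ''' ((i : ℕ) : Fin (L + 1)) s)
            (Function.update μ ((i : ℕ) : Fin (L + 1)) σ) = 0 := by
          rw [TensorSystem.pMat]
          rw [Finset.prod_eq_zero (Finset.mem_erase.mpr ⟨hj02, Finset.mem_univ j0⟩)
            (by rw [Function.update_of_ne hj01, Function.update_of_ne hj01, if_neg hne])]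
          ring
        rw [hP2, zero_mul]
      rw [finsum_congr hin, finsum_zero, mul_zero]
    rw [finsum_congr hL0, finsum_zero]
    symm
    have hR0 : ∀ υ : I,
        ((∏ j ∈ (Finset.univ.erase ((i : ℕ) : Fin (L + 1))).erase ((i + 1 : ℕ) : Fin (L + 1)),
          if μ j = μ''' j then (1 : R) else 0)
        * TS.F (lam i) (lam (i + 1)) (lam (i + 2)) υ ν₁ ν₂
        * TS.Fbar (lam i) (lam (i + 1)) (lam (i + 2)) υ ν₂ ν₃
        * TS.Fbar (μ ((i - 1 : ℕ) : Fin (L + 1))) (lam i) (lam (i + 1)) (μ''' ((i + 1 : ℕ) : Fin (L + 1))) ν₃ (μ''' ((i : ℕ) : Fin (L + 1)))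
        * TS.F (μ ((i - 1 : ℕ) : Fin (L + 1))) (lam i) (lam (i + 1)) (μ ((i + 1 : ℕ) : Fin (L + 1))) (μ ((i : ℕ) : Fin (L + 1))) ν₁
        * TS.F (μ ((i - 1 : ℕ) : Fin (L + 1))) ν₁ (lam (i + 2)) (μ ((i + 2 : ℕ) : Fin (L + 1))) (μ ((i + 1 : ℕ) : Fin (L + 1))) υ
        * TS.Fbar (μ ((i - 1 : ℕ) : Fin (L + 1))) ν₃ (lam (i + 2)) (μ ((i + 2 : ℕ) : Fin (L + 1))) υ (μ''' ((i + 1 : ℕ) : Fin (L + 1)))) = 0 := by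
      intro υ
      rw [Finset.prod_eq_zero hj0mem
        (show (if μ j0 = μ''' j0 then (1 : R) else 0) = 0 from if_neg hne)]
      ring
    rw [finsum_congr hR0, finsum_zero]
end
end

section
/- In a multiplicity-free semi-simple tensor system over a commutative ring R, for any L-tuple λ̃ = (λ_1,…,λ_L), any ν_1, ν_2, ν_3 ∈ I, any 2 ≤ i ≤ L−1, and any μ, μ''' ∈ B_{λ̃}, the triple product of projection operators has matrix elements ⟨μ'''| p_i^{(ν_3)} p_{i-1}^{(ν_2)} p_i^{(ν_1)} |μ⟩ = Σ_{υ∈I} (Π_{j≠i-1,i} δ_{μ_j}^{μ_j'''}) (F̄^{λ_{i-1}λ_iλ_{i+1}}_{υ})^{ν_1}_{ν_2} (F^{λ_{i-1}λ_iλ_{i+1}}_{υ})^{ν_2}_{ν_3} (F̄^{μ_{i-1}'''λ_iλ_{i+1}}_{μ_{i+1}})^{ν_3}_{μ_i'''} (F^{μ_{i-1}λ_iλ_{i+1}}_{μ_{i+1}})^{μ_i}_{ν_1} (F^{μ_{i-2}λ_{i-1}ν_1}_{μ_{i+1}})^{μ_{i-1}}_{υ} (F̄^{μ_{i-2}λ_{i-1}ν_3}_{μ_{i+1}})^{υ}_{μ_{i-1}'''}.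 -/
open scoped Classical

open Fin.NatCast

noncomputable section

namespace TensorSystem

variable {R : Type*} [CommRing R] {I : Type*}

variable (TS : TensorSystem R I)

lemma F_ne {a b c d e f : I} (h : TS.F a b c d e f ≠ 0) :
    TS.N a b e = 1 ∧ TS.N b c f = 1 ∧ TS.N a f d = 1 ∧ TS.N e c d = 1 := by
  have h4 : TS.N a b e * TS.N b c f * TS.N a f d * TS.N e c d ≠ 0 :=
    fun h0 => h (TS.F_vanish a b c d e f h0)
  rw [Nat.mul_ne_zero_iff, Nat.mul_ne_zero_iff, Nat.mul_ne_zero_iff] at h4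
  have l1 := TS.N_le_one a b e; have l2 := TS.N_le_one b c f
  have l3 := TS.N_le_one a f d; have l4 := TS.N_le_one e c d
  omega

lemma Fbar_ne {a b c d e f : I} (h : TS.Fbar a b c d f e ≠ 0) :
    TS.N a b e = 1 ∧ TS.N b c f = 1 ∧ TS.N a f d = 1 ∧ TS.N e c d = 1 := by
  have h4 : TS.N a b e * TS.N b c f * TS.N a f d * TS.N e c d ≠ 0 :=
    fun h0 => h (TS.Fbar_vanish a b c d e f h0)
  rw [Nat.mul_ne_zero_iff, Nat.mul_ne_zero_iff, Nat.mul_ne_zero_iff] at h4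
  have l1 := TS.N_le_one a b e; have l2 := TS.N_le_one b c f
  have l3 := TS.N_le_one a f d; have l4 := TS.N_le_one e c d
  omega

def Nfin (a b : I) : Finset I := (TS.N_finite a b).toFinset

lemma mem_Nfin {a b c : I} : c ∈ TS.Nfin a b ↔ TS.N a b c ≠ 0 :=
  (TS.N_finite a b).mem_toFinset

lemma N_one_of_mem {a b c : I} (h : c ∈ TS.Nfin a b) : TS.N a b c = 1 := by
  have := TS.mem_Nfin.mp h; have := TS.N_le_one a b c; omega

lemma N_zero_of_not_mem {a b c : I} (h : c ∉ TS.Nfin a b) : TS.N a b c = 0 := by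
  by_contra h0; exact h (TS.mem_Nfin.mpr h0)

lemma sum_eq_finsum (s : Finset I) (f : I → R) (h : ∀ x, f x ≠ 0 → x ∈ s) :
    ∑ x ∈ s, f x = ∑ᶠ x, f x :=
  (finsum_eq_finset_sum_of_support_subset f (fun x hx => h x hx)).symm

lemma absorbN (x : R) (n : ℕ) (h : x ≠ 0 → n = 1) : x * (n : R) = x := by
  by_cases hx : x = 0
  · simp [hx]
  · rw [h hx]; simp

lemma sum_delta_collapse (s : Finset I) (h : I) (v : I → R) :
    ∑ x ∈ s, (if x = h then (1 : R) else 0) * v x = if h ∈ s then v h else 0 := by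
  rw [← Finset.sum_ite_eq' s h v]
  refine Finset.sum_congr rfl fun x _ => ?_
  split <;> simp [*]



lemma F_zero₂ {a b c d e f : I} (h : TS.N b c f = 0) : TS.F a b c d e f = 0 :=
  TS.F_vanish a b c d e f (by simp [h])

lemma Fbar_zero₂ {a b c d e f : I} (h : TS.N b c f = 0) : TS.Fbar a b c d f e = 0 :=
  TS.Fbar_vanish a b c d e f (by simp [h])

lemma F_zero₁ {a b c d e f : I} (h : TS.N a b e = 0) : TS.F a b c d e f = 0 :=
  TS.F_vanish a b c d e f (by simp [h])

lemma Fbar_zero₁ {a b c d e f : I} (h : TS.N a b e = 0) : TS.Fbar a b c d f e = 0 :=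
  TS.Fbar_vanish a b c d e f (by simp [h])

lemma pentagon_fin (a b c d e f g k l : I) (s : Finset I)
    (hs : ∀ h, TS.N b c h ≠ 0 → h ∈ s) :
    ∑ h ∈ s, TS.F a b c g f h * TS.F a h d e g k * TS.F b c d k h l
      = TS.F f c d e g l * TS.F a b l e f k := by
  rw [sum_eq_finsum s _ ?_]
  · exact TS.pentagon a b c d e f g k l
  · intro x hx
    have h1 : TS.F a b c g f x ≠ 0 := fun h0 => hx (by rw [h0]; ring)
    exact hs x (by rw [(TS.F_ne h1).2.1]; exact one_ne_zero)

lemma F_Fbar_fin (a b c d e e' : I) (s : Finset I)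
    (hs : ∀ f, TS.N b c f ≠ 0 → f ∈ s) :
    ∑ f ∈ s, TS.F a b c d e f * TS.Fbar a b c d f e'
      = (if e = e' then (1 : R) else 0) * (TS.N a b e : R) * (TS.N e c d : R) := by
  rw [sum_eq_finsum s _ ?_]
  · exact TS.F_Fbar a b c d e e'
  · intro x hx
    have h1 : TS.F a b c d e x ≠ 0 := fun h0 => hx (by rw [h0]; ring)
    exact hs x (by rw [(TS.F_ne h1).2.1]; exact one_ne_zero)

lemma Fbar_F_fin (a b c d f f' : I) (s : Finset I)
    (hs : ∀ e, TS.N a b e ≠ 0 → e ∈ s) :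
    ∑ e ∈ s, TS.Fbar a b c d f' e * TS.F a b c d e f
      = (if f = f' then (1 : R) else 0) * (TS.N b c f : R) * (TS.N a f d : R) := by
  rw [sum_eq_finsum s _ ?_]
  · exact TS.Fbar_F a b c d f f'
  · intro x hx
    have h1 : TS.Fbar a b c d f' x ≠ 0 := fun h0 => hx (by rw [h0]; ring)
    exact hs x (by rw [(TS.Fbar_ne h1).1]; exact one_ne_zero)

/-- (Q): pentagon contracted once with `Fbar` over the `l` index. -/
lemma lemQ (a b c d e f g h k : I) :
    TS.F a b c g f h * TS.F a h d e g k
      = ∑ l ∈ TS.Nfin c d, TS.F f c d e g l * TS.F a b l e f k * TS.Fbar b c d k l h := by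
  have step1 : ∑ l ∈ TS.Nfin c d, TS.F f c d e g l * TS.F a b l e f k * TS.Fbar b c d k l h
      = ∑ l ∈ TS.Nfin c d,
          (∑ h' ∈ TS.Nfin b c, TS.F a b c g f h' * TS.F a h' d e g k * TS.F b c d k h' l)
            * TS.Fbar b c d k l h := by
    refine Finset.sum_congr rfl fun l _ => ?_
    rw [TS.pentagon_fin a b c d e f g k l (TS.Nfin b c) (fun x hx => TS.mem_Nfin.mpr hx)]
  rw [step1]
  have step2 : ∑ l ∈ TS.Nfin c d,
        (∑ h' ∈ TS.Nfin b c, TS.F a b c g f h' * TS.F a h' d e g k * TS.F b c d k h' l)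
          * TS.Fbar b c d k l h
      = ∑ h' ∈ TS.Nfin b c, (TS.F a b c g f h' * TS.F a h' d e g k) *
          (∑ l ∈ TS.Nfin c d, TS.F b c d k h' l * TS.Fbar b c d k l h) := by
    simp only [Finset.sum_mul, Finset.mul_sum, mul_assoc]
    exact Finset.sum_comm
  rw [step2]
  have step3 : ∀ h' ∈ TS.Nfin b c,
      (TS.F a b c g f h' * TS.F a h' d e g k) *
          (∑ l ∈ TS.Nfin c d, TS.F b c d k h' l * TS.Fbar b c d k l h)
      = (if h' = h then (1:R) else 0) *
          ((TS.F a b c g f h' * TS.F a h' d e g k) * ((TS.N b c h' : R) * (TS.N h' d k : R))) := by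
    intro h' _
    rw [TS.F_Fbar_fin b c d k h' h (TS.Nfin c d) (fun x hx => TS.mem_Nfin.mpr hx)]
    ring
  rw [Finset.sum_congr rfl step3, sum_delta_collapse]
  by_cases hm : h ∈ TS.Nfin b c
  · rw [if_pos hm, TS.N_one_of_mem hm]
    push_cast
    rw [one_mul]
    exact (absorbN _ _ (fun hx => (TS.F_ne (fun h0 => hx (by rw [h0]; ring))).2.1)).symm
  · rw [if_neg hm, TS.F_zero₂ (TS.N_zero_of_not_mem hm), zero_mul]



lemma F_zero₃ {a b c d e f : I} (h : TS.N a f d = 0) : TS.F a b c d e f = 0 :=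
  TS.F_vanish a b c d e f (by simp [h])

lemma Fbar_zero₃ {a b c d e f : I} (h : TS.N a f d = 0) : TS.Fbar a b c d f e = 0 :=
  TS.Fbar_vanish a b c d e f (by simp [h])

lemma F_zero₄ {a b c d e f : I} (h : TS.N e c d = 0) : TS.F a b c d e f = 0 :=
  TS.F_vanish a b c d e f (by simp [h])

lemma Fbar_zero₄ {a b c d e f : I} (h : TS.N e c d = 0) : TS.Fbar a b c d f e = 0 :=
  TS.Fbar_vanish a b c d e f (by simp [h])

/-- (R): `∑ₓ A·C·F = F·F̄`. -/
lemma lemR (a' b' c' a₀ d₀ e₀ ν₁ ν₂ k : I) :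
    ∑ x ∈ TS.Nfin a₀ b',
        TS.Fbar a₀ b' c' d₀ ν₁ x * TS.F e₀ a' b' x a₀ ν₂ * TS.F e₀ ν₂ c' d₀ x k
      = TS.F e₀ a' ν₁ d₀ a₀ k * TS.Fbar a' b' c' k ν₁ ν₂ := by
  have step1 : ∀ x ∈ TS.Nfin a₀ b',
      TS.Fbar a₀ b' c' d₀ ν₁ x * TS.F e₀ a' b' x a₀ ν₂ * TS.F e₀ ν₂ c' d₀ x k
        = ∑ l ∈ TS.Nfin b' c', TS.Fbar a₀ b' c' d₀ ν₁ x *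
            (TS.F a₀ b' c' d₀ x l * TS.F e₀ a' l d₀ a₀ k * TS.Fbar a' b' c' k l ν₂) := by
    intro x _
    rw [mul_assoc, TS.lemQ e₀ a' b' c' d₀ a₀ x ν₂ k, Finset.mul_sum]
  rw [Finset.sum_congr rfl step1, Finset.sum_comm]
  have step2 : ∀ l ∈ TS.Nfin b' c',
      ∑ x ∈ TS.Nfin a₀ b', TS.Fbar a₀ b' c' d₀ ν₁ x *
          (TS.F a₀ b' c' d₀ x l * TS.F e₀ a' l d₀ a₀ k * TS.Fbar a' b' c' k l ν₂)
        = (if l = ν₁ then (1:R) else 0) *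
            ((TS.N b' c' l : R) * (TS.N a₀ l d₀ : R) *
              (TS.F e₀ a' l d₀ a₀ k * TS.Fbar a' b' c' k l ν₂)) := by
    intro l _
    have : ∑ x ∈ TS.Nfin a₀ b', TS.Fbar a₀ b' c' d₀ ν₁ x *
          (TS.F a₀ b' c' d₀ x l * TS.F e₀ a' l d₀ a₀ k * TS.Fbar a' b' c' k l ν₂)
        = (∑ x ∈ TS.Nfin a₀ b', TS.Fbar a₀ b' c' d₀ ν₁ x * TS.F a₀ b' c' d₀ x l) *
            (TS.F e₀ a' l d₀ a₀ k * TS.Fbar a' b' c' k l ν₂) := by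
      rw [Finset.sum_mul]; exact Finset.sum_congr rfl fun x _ => by ring
    rw [this, TS.Fbar_F_fin a₀ b' c' d₀ l ν₁ _ (fun x hx => TS.mem_Nfin.mpr hx)]
    ring
  rw [Finset.sum_congr rfl step2, sum_delta_collapse]
  by_cases hm : ν₁ ∈ TS.Nfin b' c'
  · rw [if_pos hm, TS.N_one_of_mem hm]
    push_cast
    rw [one_mul, mul_comm ((TS.N a₀ ν₁ d₀ : R)) _]
    exact absorbN _ _ (fun hx =>
      (TS.F_ne (show TS.F e₀ a' ν₁ d₀ a₀ k ≠ 0 from fun h0 => hx (by rw [h0]; ring))).2.2.2)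
  · rw [if_neg hm, TS.Fbar_zero₂ (TS.N_zero_of_not_mem hm), mul_zero]

/-- (Q'): pentagon contracted on the `f` index. -/
lemma lemQ' (a b c d e g h k l : I) :
    TS.F a h d e g k * TS.F b c d k h l
      = ∑ f ∈ TS.Nfin a b, TS.Fbar a b c g h f * (TS.F f c d e g l * TS.F a b l e f k) := by
  have step1 : ∀ f ∈ TS.Nfin a b,
      TS.Fbar a b c g h f * (TS.F f c d e g l * TS.F a b l e f k)
        = ∑ h' ∈ TS.Nfin b c, TS.Fbar a b c g h f *
            (TS.F a b c g f h' * TS.F a h' d e g k * TS.F b c d k h' l) := by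
    intro f _
    rw [← TS.pentagon_fin a b c d e f g k l (TS.Nfin b c) (fun x hx => TS.mem_Nfin.mpr hx),
      Finset.mul_sum]
  rw [Finset.sum_congr rfl step1, Finset.sum_comm]
  have step2 : ∀ h' ∈ TS.Nfin b c,
      ∑ f ∈ TS.Nfin a b, TS.Fbar a b c g h f *
          (TS.F a b c g f h' * TS.F a h' d e g k * TS.F b c d k h' l)
        = (if h' = h then (1:R) else 0) *
            ((TS.N b c h' : R) * (TS.N a h' g : R) * (TS.F a h' d e g k * TS.F b c d k h' l)) := by
    intro h' _
    have : ∑ f ∈ TS.Nfin a b, TS.Fbar a b c g h f *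
          (TS.F a b c g f h' * TS.F a h' d e g k * TS.F b c d k h' l)
        = (∑ f ∈ TS.Nfin a b, TS.Fbar a b c g h f * TS.F a b c g f h') *
            (TS.F a h' d e g k * TS.F b c d k h' l) := by
      rw [Finset.sum_mul]; exact Finset.sum_congr rfl fun f _ => by ring
    rw [this, TS.Fbar_F_fin a b c g h' h _ (fun x hx => TS.mem_Nfin.mpr hx)]
    ring
  rw [Finset.sum_congr rfl step2, sum_delta_collapse]
  by_cases hm : h ∈ TS.Nfin b c
  · rw [if_pos hm, TS.N_one_of_mem hm]
    push_cast
    rw [one_mul, mul_comm ((TS.N a h g : R)) _]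
    exact (absorbN _ _ (fun hx =>
      (TS.F_ne (show TS.F a h d e g k ≠ 0 from fun h0 => hx (by rw [h0]; ring))).1)).symm
  · rw [if_neg hm, TS.F_zero₁ (TS.N_zero_of_not_mem hm), mul_zero]

/-- (★): (Q') contracted on the `k` index. -/
lemma lemS1 (a b c d e f g h l : I) (s : Finset I) (hs : ∀ k, TS.N b l k ≠ 0 → k ∈ s) :
    ∑ k ∈ s, TS.Fbar a b l e k f * (TS.F a h d e g k * TS.F b c d k h l)
      = TS.Fbar a b c g h f * TS.F f c d e g l := by
  have step1 : ∀ k ∈ s,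
      TS.Fbar a b l e k f * (TS.F a h d e g k * TS.F b c d k h l)
        = ∑ f' ∈ TS.Nfin a b, TS.Fbar a b l e k f *
            (TS.Fbar a b c g h f' * (TS.F f' c d e g l * TS.F a b l e f' k)) := by
    intro k _
    rw [TS.lemQ' a b c d e g h k l, Finset.mul_sum]
  rw [Finset.sum_congr rfl step1, Finset.sum_comm]
  have step2 : ∀ f' ∈ TS.Nfin a b,
      ∑ k ∈ s, TS.Fbar a b l e k f *
          (TS.Fbar a b c g h f' * (TS.F f' c d e g l * TS.F a b l e f' k))
        = (if f' = f then (1:R) else 0) *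
            ((TS.N a b f' : R) * (TS.N f' l e : R) *
              (TS.Fbar a b c g h f' * TS.F f' c d e g l)) := by
    intro f' _
    have : ∑ k ∈ s, TS.Fbar a b l e k f *
          (TS.Fbar a b c g h f' * (TS.F f' c d e g l * TS.F a b l e f' k))
        = (∑ k ∈ s, TS.F a b l e f' k * TS.Fbar a b l e k f) *
            (TS.Fbar a b c g h f' * TS.F f' c d e g l) := by
      rw [Finset.sum_mul]; exact Finset.sum_congr rfl fun k _ => by ring
    rw [this, TS.F_Fbar_fin a b l e f' f s hs]
    ring
  rw [Finset.sum_congr rfl step2, sum_delta_collapse]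
  by_cases hm : f ∈ TS.Nfin a b
  · rw [if_pos hm, TS.N_one_of_mem hm]
    push_cast
    rw [one_mul, mul_comm ((TS.N f l e : R)) _]
    exact absorbN _ _ (fun hx =>
      (TS.F_ne (show TS.F f c d e g l ≠ 0 from fun h0 => hx (by rw [h0]; ring))).2.2.1)
  · rw [if_neg hm, TS.Fbar_zero₁ (TS.N_zero_of_not_mem hm), zero_mul]

/-- (S): (★) contracted on the `g` index. -/
lemma lemS (a b c d e f h k l : I) :
    ∑ g ∈ TS.Nfin a h, TS.Fbar a h d e k g * (TS.Fbar a b c g h f * TS.F f c d e g l)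
      = TS.Fbar a b l e k f * TS.F b c d k h l := by
  have step1 : ∀ g ∈ TS.Nfin a h,
      TS.Fbar a h d e k g * (TS.Fbar a b c g h f * TS.F f c d e g l)
        = ∑ k' ∈ TS.Nfin b l, TS.Fbar a h d e k g *
            (TS.Fbar a b l e k' f * (TS.F a h d e g k' * TS.F b c d k' h l)) := by
    intro g _
    rw [← TS.lemS1 a b c d e f g h l (TS.Nfin b l) (fun x hx => TS.mem_Nfin.mpr hx),
      Finset.mul_sum]
  rw [Finset.sum_congr rfl step1, Finset.sum_comm]
  have step2 : ∀ k' ∈ TS.Nfin b l,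
      ∑ g ∈ TS.Nfin a h, TS.Fbar a h d e k g *
          (TS.Fbar a b l e k' f * (TS.F a h d e g k' * TS.F b c d k' h l))
        = (if k' = k then (1:R) else 0) *
            ((TS.N h d k' : R) * (TS.N a k' e : R) *
              (TS.Fbar a b l e k' f * TS.F b c d k' h l)) := by
    intro k' _
    have : ∑ g ∈ TS.Nfin a h, TS.Fbar a h d e k g *
          (TS.Fbar a b l e k' f * (TS.F a h d e g k' * TS.F b c d k' h l))
        = (∑ g ∈ TS.Nfin a h, TS.Fbar a h d e k g * TS.F a h d e g k') *
            (TS.Fbar a b l e k' f * TS.F b c d k' h l) := by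
      rw [Finset.sum_mul]; exact Finset.sum_congr rfl fun g _ => by ring
    rw [this, TS.Fbar_F_fin a h d e k' k _ (fun x hx => TS.mem_Nfin.mpr hx)]
    ring
  rw [Finset.sum_congr rfl step2, sum_delta_collapse]
  by_cases hm : k ∈ TS.Nfin b l
  · rw [if_pos hm]
    have h1 : (TS.Fbar a b l e k f * TS.F b c d k h l) * (TS.N h d k : R) 
        = TS.Fbar a b l e k f * TS.F b c d k h l := absorbN _ _ (fun hx =>
      (TS.F_ne (show TS.F b c d k h l ≠ 0 from fun h0 => hx (by rw [h0]; ring))).2.2.2)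
    have h2 : (TS.Fbar a b l e k f * TS.F b c d k h l) * (TS.N a k e : R)
        = TS.Fbar a b l e k f * TS.F b c d k h l := absorbN _ _ (fun hx =>
      (TS.Fbar_ne (show TS.Fbar a b l e k f ≠ 0 from fun h0 => hx (by rw [h0]; ring))).2.2.1)
    calc (TS.N h d k : R) * (TS.N a k e : R) * (TS.Fbar a b l e k f * TS.F b c d k h l)
        = ((TS.Fbar a b l e k f * TS.F b c d k h l) * (TS.N h d k : R)) * (TS.N a k e : R) := by ring
      _ = TS.Fbar a b l e k f * TS.F b c d k h l := by rw [h1, h2]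
  · rw [if_neg hm, TS.Fbar_zero₂ (TS.N_zero_of_not_mem hm), zero_mul]



/-- The core algebraic identity behind the triple-product formula. -/
lemma core (a b d e a' b' c' ν₁ ν₂ ν₃ : I) :
    ∑ᶠ x, TS.Fbar a b' c' d ν₁ x * TS.Fbar e a' b' x ν₂ b *
        TS.F e a' b' x a ν₂ * TS.F b b' c' d x ν₃
      = ∑ᶠ υ, TS.Fbar a' b' c' υ ν₁ ν₂ * TS.F a' b' c' υ ν₂ ν₃ *
          TS.F e a' ν₁ d a υ * TS.Fbar e a' ν₃ d υ b := by
  classical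
  set s : Finset I := TS.Nfin a' ν₁ ∪ TS.Nfin ν₂ c' with hs_def
  have hRHS : ∑ᶠ υ, TS.Fbar a' b' c' υ ν₁ ν₂ * TS.F a' b' c' υ ν₂ ν₃ *
          TS.F e a' ν₁ d a υ * TS.Fbar e a' ν₃ d υ b
      = ∑ υ ∈ s, TS.Fbar a' b' c' υ ν₁ ν₂ * TS.F a' b' c' υ ν₂ ν₃ *
          TS.F e a' ν₁ d a υ * TS.Fbar e a' ν₃ d υ b := by
    rw [sum_eq_finsum]
    intro υ hυ
    have h1 : TS.F e a' ν₁ d a υ ≠ 0 := fun h0 => hυ (by rw [h0]; ring)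
    exact Finset.mem_union_left _ (TS.mem_Nfin.mpr (by rw [(TS.F_ne h1).2.1]; exact one_ne_zero))
  have hLHS : ∑ᶠ x, TS.Fbar a b' c' d ν₁ x * TS.Fbar e a' b' x ν₂ b *
        TS.F e a' b' x a ν₂ * TS.F b b' c' d x ν₃
      = ∑ x ∈ TS.Nfin a b', TS.Fbar a b' c' d ν₁ x * TS.Fbar e a' b' x ν₂ b *
        TS.F e a' b' x a ν₂ * TS.F b b' c' d x ν₃ := by
    rw [sum_eq_finsum]
    intro x hx
    have h1 : TS.Fbar a b' c' d ν₁ x ≠ 0 := fun h0 => hx (by rw [h0]; ring)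
    exact TS.mem_Nfin.mpr (by rw [(TS.Fbar_ne h1).1]; exact one_ne_zero)
  rw [hRHS, hLHS]
  -- substitute lemR and lemS backwards in each RHS summand
  have step1 : ∀ υ ∈ s,
      TS.Fbar a' b' c' υ ν₁ ν₂ * TS.F a' b' c' υ ν₂ ν₃ *
          TS.F e a' ν₁ d a υ * TS.Fbar e a' ν₃ d υ b
        = (∑ x ∈ TS.Nfin a b', TS.Fbar a b' c' d ν₁ x * TS.F e a' b' x a ν₂ * TS.F e ν₂ c' d x υ)
            * (∑ y ∈ TS.Nfin e ν₂, TS.Fbar e ν₂ c' d υ y *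
                (TS.Fbar e a' b' y ν₂ b * TS.F b b' c' d y ν₃)) := by
    intro υ _
    rw [TS.lemR a' b' c' a d e ν₁ ν₂ υ, TS.lemS e a' b' c' d b ν₂ υ ν₃]
    ring
  rw [Finset.sum_congr rfl step1]
  -- expand the product of sums and push the υ-sum inside
  have step2 : ∑ υ ∈ s,
      (∑ x ∈ TS.Nfin a b', TS.Fbar a b' c' d ν₁ x * TS.F e a' b' x a ν₂ * TS.F e ν₂ c' d x υ)
        * (∑ y ∈ TS.Nfin e ν₂, TS.Fbar e ν₂ c' d υ y *
            (TS.Fbar e a' b' y ν₂ b * TS.F b b' c' d y ν₃))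
      = ∑ x ∈ TS.Nfin a b', ∑ y ∈ TS.Nfin e ν₂,
          (TS.Fbar a b' c' d ν₁ x * TS.F e a' b' x a ν₂) *
            (TS.Fbar e a' b' y ν₂ b * TS.F b b' c' d y ν₃) *
            (∑ υ ∈ s, TS.F e ν₂ c' d x υ * TS.Fbar e ν₂ c' d υ y) := by
    calc ∑ υ ∈ s,
        (∑ x ∈ TS.Nfin a b', TS.Fbar a b' c' d ν₁ x * TS.F e a' b' x a ν₂ * TS.F e ν₂ c' d x υ)
          * (∑ y ∈ TS.Nfin e ν₂, TS.Fbar e ν₂ c' d υ y *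
              (TS.Fbar e a' b' y ν₂ b * TS.F b b' c' d y ν₃))
        = ∑ υ ∈ s, ∑ x ∈ TS.Nfin a b', ∑ y ∈ TS.Nfin e ν₂,
            (TS.Fbar a b' c' d ν₁ x * TS.F e a' b' x a ν₂ * TS.F e ν₂ c' d x υ) *
              (TS.Fbar e ν₂ c' d υ y * (TS.Fbar e a' b' y ν₂ b * TS.F b b' c' d y ν₃)) :=
          Finset.sum_congr rfl fun υ _ => Finset.sum_mul_sum _ _ _ _
      _ = ∑ x ∈ TS.Nfin a b', ∑ υ ∈ s, ∑ y ∈ TS.Nfin e ν₂,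
            (TS.Fbar a b' c' d ν₁ x * TS.F e a' b' x a ν₂ * TS.F e ν₂ c' d x υ) *
              (TS.Fbar e ν₂ c' d υ y * (TS.Fbar e a' b' y ν₂ b * TS.F b b' c' d y ν₃)) :=
          Finset.sum_comm
      _ = ∑ x ∈ TS.Nfin a b', ∑ y ∈ TS.Nfin e ν₂, ∑ υ ∈ s,
            (TS.Fbar a b' c' d ν₁ x * TS.F e a' b' x a ν₂ * TS.F e ν₂ c' d x υ) *
              (TS.Fbar e ν₂ c' d υ y * (TS.Fbar e a' b' y ν₂ b * TS.F b b' c' d y ν₃)) :=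
          Finset.sum_congr rfl fun x _ => Finset.sum_comm
      _ = ∑ x ∈ TS.Nfin a b', ∑ y ∈ TS.Nfin e ν₂,
          (TS.Fbar a b' c' d ν₁ x * TS.F e a' b' x a ν₂) *
            (TS.Fbar e a' b' y ν₂ b * TS.F b b' c' d y ν₃) *
            (∑ υ ∈ s, TS.F e ν₂ c' d x υ * TS.Fbar e ν₂ c' d υ y) := by
          refine Finset.sum_congr rfl fun x _ => Finset.sum_congr rfl fun y _ => ?_
          rw [Finset.mul_sum]
          exact Finset.sum_congr rfl fun υ _ => by ring
  rw [step2]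
  -- contract the υ-sum to a delta and collapse the y-sum
  have step3 : ∀ x ∈ TS.Nfin a b', ∀ y ∈ TS.Nfin e ν₂,
      (TS.Fbar a b' c' d ν₁ x * TS.F e a' b' x a ν₂) *
          (TS.Fbar e a' b' y ν₂ b * TS.F b b' c' d y ν₃) *
          (∑ υ ∈ s, TS.F e ν₂ c' d x υ * TS.Fbar e ν₂ c' d υ y)
        = (if y = x then (1:R) else 0) *
            ((TS.Fbar a b' c' d ν₁ x * TS.F e a' b' x a ν₂) *
              (TS.Fbar e a' b' y ν₂ b * TS.F b b' c' d y ν₃) *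
              ((TS.N e ν₂ x : R) * (TS.N x c' d : R))) := by
    intro x _ y _
    rw [TS.F_Fbar_fin e ν₂ c' d x y s
      (fun f hf => Finset.mem_union_right _ (TS.mem_Nfin.mpr hf))]
    by_cases hxy : x = y
    · subst hxy; simp only [if_pos rfl]; ring
    · rw [if_neg hxy, if_neg (Ne.symm hxy)]; ring
  rw [Finset.sum_congr rfl (fun x hx => Finset.sum_congr rfl (step3 x hx)),
    Finset.sum_congr rfl (fun x _ => sum_delta_collapse (TS.Nfin e ν₂) x _)]
  refine Finset.sum_congr rfl fun x _ => ?_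
  by_cases hm : x ∈ TS.Nfin e ν₂
  · have habs : (TS.Fbar a b' c' d ν₁ x * TS.F e a' b' x a ν₂ *
          (TS.Fbar e a' b' x ν₂ b * TS.F b b' c' d x ν₃)) * (TS.N x c' d : R)
        = TS.Fbar a b' c' d ν₁ x * TS.F e a' b' x a ν₂ *
          (TS.Fbar e a' b' x ν₂ b * TS.F b b' c' d x ν₃) := absorbN _ _ (fun hx =>
      (TS.Fbar_ne (show TS.Fbar a b' c' d ν₁ x ≠ 0 from fun h0 => hx (by rw [h0]; ring))).2.2.2)
    rw [if_pos hm, TS.N_one_of_mem hm]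
    push_cast
    rw [one_mul, habs]
    ring
  · rw [if_neg hm]
    have : TS.F e a' b' x a ν₂ = 0 :=
      TS.F_zero₃ (by
        have := TS.N_zero_of_not_mem hm
        exact this)
    rw [this]
    ring


lemma prod_delta {n : ℕ} (s : Finset (Fin n)) (f g : Fin n → I) :
    (∏ j ∈ s, if f j = g j then (1:R) else 0)
      = if ∀ j ∈ s, f j = g j then (1:R) else 0 := by
  by_cases h : ∀ j ∈ s, f j = g j
  · rw [if_pos h]; exact Finset.prod_eq_one fun j hj => by rw [if_pos (h j hj)]
  · rw [if_neg h]; push_neg at h; obtain ⟨j, hj, hne⟩ := h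
    exact Finset.prod_eq_zero hj (by rw [if_neg hne])

lemma finsum_mem_localize {n : ℕ} {S : Set (Fin n → I)} (t : Fin n) (base : Fin n → I)
    (g : (Fin n → I) → R)
    (h1 : ∀ ρ, g ρ ≠ 0 → ∀ j, j ≠ t → ρ j = base j)
    (h2 : ∀ x, g (Function.update base t x) ≠ 0 → Function.update base t x ∈ S) :
    ∑ᶠ ρ ∈ S, g ρ = ∑ᶠ x, g (Function.update base t x) := by
  have hinj : Function.Injective (Function.update base t) := fun x y hxy => by
    have := congrFun hxy t; simpa using this
  have hset : S ∩ Function.support g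
      = Set.range (Function.update base t) ∩ Function.support g := by
    ext ρ; constructor
    · rintro ⟨_, hg⟩
      refine ⟨⟨ρ t, ?_⟩, hg⟩
      funext j
      by_cases hj : j = t
      · subst hj; simp
      · rw [Function.update_of_ne hj]
        exact (h1 ρ hg j hj).symm
    · rintro ⟨⟨x, hx⟩, hg⟩
      subst hx
      exact ⟨h2 x hg, hg⟩
  calc ∑ᶠ ρ ∈ S, g ρ = ∑ᶠ ρ ∈ S ∩ Function.support g, g ρ :=
        (finsum_mem_inter_support g S).symm
    _ = ∑ᶠ ρ ∈ Set.range (Function.update base t) ∩ Function.support g, g ρ := by rw [hset]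
    _ = ∑ᶠ ρ ∈ Set.range (Function.update base t), g ρ := finsum_mem_inter_support g _
    _ = ∑ᶠ x, g (Function.update base t x) := finsum_mem_range hinj

lemma val_natCast_le {L j : ℕ} (hj : j ≤ L) : (((j : ℕ) : Fin (L+1)) : ℕ) = j := by
  rw [Fin.val_natCast, Nat.mod_eq_of_lt (by omega)]

lemma natCast_ne {L j k : ℕ} (hj : j ≤ L) (hk : k ≤ L) (hne : j ≠ k) :
    ((j : ℕ) : Fin (L+1)) ≠ ((k : ℕ) : Fin (L+1)) := by
  intro h
  have := congrArg Fin.val h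
  rw [val_natCast_le hj, val_natCast_le hk] at this
  exact hne this

lemma isPath_update (L : ℕ) (I0 : Set I) (lam : ℕ → I) {μ : Fin (L+1) → I}
    (hμ : TS.IsPath L I0 lam μ) {i : ℕ} (hi1 : 1 ≤ i) (hiL : i + 1 ≤ L) (x : I)
    (hx1 : TS.N (μ ((i - 1 : ℕ) : Fin (L+1))) (lam i) x = 1)
    (hx2 : TS.N x (lam (i + 1)) (μ ((i + 1 : ℕ) : Fin (L+1))) = 1) :
    TS.IsPath L I0 lam (Function.update μ ((i : ℕ) : Fin (L+1)) x) := by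
  have hz : ((0 : ℕ) : Fin (L+1)) = 0 := Nat.cast_zero
  constructor
  · rw [show (0 : Fin (L+1)) = ((0 : ℕ) : Fin (L+1)) from hz.symm,
      Function.update_of_ne (natCast_ne (by omega) (by omega) (by omega))]
    exact hμ.1
  · intro j hj1 hjL
    by_cases hji : j = i
    · subst hji
      rw [Function.update_of_ne (natCast_ne (by omega) (by omega) (by omega)),
        Function.update_self]
      exact hx1
    · by_cases hji1 : j = i + 1
      · subst hji1
        rw [show (i + 1 - 1 : ℕ) = i from by omega, Function.update_self,
          Function.update_of_ne (natCast_ne (by omega) (by omega) (by omega))]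
        exact hx2
      · rw [Function.update_of_ne (natCast_ne (by omega) (by omega) (by omega)),
          Function.update_of_ne (natCast_ne (by omega) (by omega) (by omega))]
        exact hμ.2 j hj1 hjL

end TensorSystem

open TensorSystem in
/-- matrix elements of `p_i^{(ν₃)} p_{i-1}^{(ν₂)} p_i^{(ν₁)}`. -/
theorem triple_product_matrix_elements_down
    {R : Type*} [CommRing R] {I : Type*}
    (TS : TensorSystem R I) (L : ℕ) (I0 : Set I) (hI0 : I0.Finite)
    (lam : ℕ → I) (ν₁ ν₂ ν₃ : I) (i : ℕ) (hi : 2 ≤ i) (hiL : i + 1 ≤ L)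
    (μ μ''' : Fin (L + 1) → I)
    (hμ : TS.IsPath L I0 lam μ) (hμ''' : TS.IsPath L I0 lam μ''') :
    TS.mulMat L I0 lam (TS.pMat L lam i ν₃)
      (TS.mulMat L I0 lam (TS.pMat L lam (i - 1) ν₂) (TS.pMat L lam i ν₁)) μ''' μ
    = ∑ᶠ υ : I,
      ((∏ j ∈ (Finset.univ.erase ((i - 1 : ℕ) : Fin (L + 1))).erase ((i : ℕ) : Fin (L + 1)),
          if μ j = μ''' j then (1 : R) else 0)
        * TS.Fbar (lam (i - 1)) (lam i) (lam (i + 1)) υ ν₁ ν₂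
        * TS.F (lam (i - 1)) (lam i) (lam (i + 1)) υ ν₂ ν₃
        * TS.Fbar (μ''' ((i - 1 : ℕ) : Fin (L + 1))) (lam i) (lam (i + 1)) (μ ((i + 1 : ℕ) : Fin (L + 1))) ν₃ (μ''' ((i : ℕ) : Fin (L + 1)))
        * TS.F (μ ((i - 1 : ℕ) : Fin (L + 1))) (lam i) (lam (i + 1)) (μ ((i + 1 : ℕ) : Fin (L + 1))) (μ ((i : ℕ) : Fin (L + 1))) ν₁
        * TS.F (μ ((i - 2 : ℕ) : Fin (L + 1))) (lam (i - 1)) ν₁ (μ ((i + 1 : ℕ) : Fin (L + 1))) (μ ((i - 1 : ℕ) : Fin (L + 1))) υ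
        * TS.Fbar (μ ((i - 2 : ℕ) : Fin (L + 1))) (lam (i - 1)) ν₃ (μ ((i + 1 : ℕ) : Fin (L + 1))) υ (μ''' ((i - 1 : ℕ) : Fin (L + 1)))) := by
  classical
  have e1 : (i - 1 + 1 : ℕ) = i := by omega
  have e2 : (i - 1 - 1 : ℕ) = i - 2 := by omega
  have ne_i1_i : ((i - 1 : ℕ) : Fin (L+1)) ≠ ((i : ℕ) : Fin (L+1)) :=
    natCast_ne (by omega) (by omega) (by omega)
  have ne_ic_i1 : ((i : ℕ) : Fin (L+1)) ≠ ((i - 1 : ℕ) : Fin (L+1)) := ne_i1_i.symm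
  have ne_ip1_i : ((i + 1 : ℕ) : Fin (L+1)) ≠ ((i : ℕ) : Fin (L+1)) :=
    natCast_ne (by omega) (by omega) (by omega)
  have ne_i2_i : ((i - 2 : ℕ) : Fin (L+1)) ≠ ((i : ℕ) : Fin (L+1)) :=
    natCast_ne (by omega) (by omega) (by omega)
  have ne_ip1_i1 : ((i + 1 : ℕ) : Fin (L+1)) ≠ ((i - 1 : ℕ) : Fin (L+1)) :=
    natCast_ne (by omega) (by omega) (by omega)
  -- localize the inner sum
  have inner_eq : ∀ μ'' : Fin (L + 1) → I,
      TS.mulMat L I0 lam (TS.pMat L lam (i - 1) ν₂) (TS.pMat L lam i ν₁) μ'' μ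
        = ∑ᶠ x, TS.pMat L lam (i - 1) ν₂ μ'' (Function.update μ ((i : ℕ) : Fin (L+1)) x) *
            TS.pMat L lam i ν₁ (Function.update μ ((i : ℕ) : Fin (L+1)) x) μ := by
    intro μ''
    show ∑ᶠ μ' ∈ {x : Fin (L+1) → I | TS.IsPath L I0 lam x},
        TS.pMat L lam (i - 1) ν₂ μ'' μ' * TS.pMat L lam i ν₁ μ' μ = _
    refine finsum_mem_localize _ μ _ ?_ ?_
    · intro ρ hρ j hj
      have hP1 : TS.pMat L lam i ν₁ ρ μ ≠ 0 := fun h0 => hρ (by rw [h0, mul_zero])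
      have hd : (∏ j ∈ Finset.univ.erase ((i : ℕ) : Fin (L+1)),
          if μ j = ρ j then (1:R) else 0) ≠ 0 := by
        intro h0; apply hP1
        show (∏ j ∈ Finset.univ.erase ((i : ℕ) : Fin (L+1)),
          if μ j = ρ j then (1:R) else 0) * _ * _ = 0
        rw [h0, zero_mul, zero_mul]
      rw [prod_delta] at hd
      have hc : ∀ j ∈ Finset.univ.erase ((i : ℕ) : Fin (L+1)), μ j = ρ j := by
        by_contra hcc; rw [if_neg hcc] at hd; exact hd rfl
      exact (hc j (Finset.mem_erase.mpr ⟨hj, Finset.mem_univ j⟩)).symm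
    · intro x hx
      have hP1 : TS.pMat L lam i ν₁ (Function.update μ ((i : ℕ) : Fin (L+1)) x) μ ≠ 0 :=
        fun h0 => hx (by rw [h0, mul_zero])
      have hFb : TS.Fbar (μ ((i - 1 : ℕ) : Fin (L+1))) (lam i) (lam (i+1))
          (μ ((i + 1 : ℕ) : Fin (L+1))) ν₁ x ≠ 0 := by
        intro h0; apply hP1
        show _ * TS.Fbar (μ ((i - 1 : ℕ) : Fin (L+1))) (lam i) (lam (i+1))
            (μ ((i + 1 : ℕ) : Fin (L+1))) ν₁
            (Function.update μ ((i : ℕ) : Fin (L+1)) x ((i : ℕ) : Fin (L+1))) * _ = 0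
        rw [Function.update_self, h0, mul_zero, zero_mul]
      have hcond := TS.Fbar_ne hFb
      exact TS.isPath_update L I0 lam hμ (by omega) hiL x hcond.1 hcond.2.2.2
  -- localize the outer sum
  have loc : ∑ᶠ μ'' ∈ {x : Fin (L+1) → I | TS.IsPath L I0 lam x},
      TS.pMat L lam i ν₃ μ''' μ'' *
        TS.mulMat L I0 lam (TS.pMat L lam (i-1) ν₂) (TS.pMat L lam i ν₁) μ'' μ
    = ∑ᶠ y, TS.pMat L lam i ν₃ μ''' (Function.update μ''' ((i : ℕ) : Fin (L+1)) y) *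
        TS.mulMat L I0 lam (TS.pMat L lam (i-1) ν₂) (TS.pMat L lam i ν₁)
          (Function.update μ''' ((i : ℕ) : Fin (L+1)) y) μ := by
    refine finsum_mem_localize _ μ''' _ ?_ ?_
    · intro ρ hρ j hj
      have hP3 : TS.pMat L lam i ν₃ μ''' ρ ≠ 0 := fun h0 => hρ (by rw [h0, zero_mul])
      have hd : (∏ j ∈ Finset.univ.erase ((i : ℕ) : Fin (L+1)),
          if ρ j = μ''' j then (1:R) else 0) ≠ 0 := by
        intro h0; apply hP3
        show (∏ j ∈ Finset.univ.erase ((i : ℕ) : Fin (L+1)),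
          if ρ j = μ''' j then (1:R) else 0) * _ * _ = 0
        rw [h0, zero_mul, zero_mul]
      rw [prod_delta] at hd
      have hc : ∀ j ∈ Finset.univ.erase ((i : ℕ) : Fin (L+1)), ρ j = μ''' j := by
        by_contra hcc; rw [if_neg hcc] at hd; exact hd rfl
      exact hc j (Finset.mem_erase.mpr ⟨hj, Finset.mem_univ j⟩)
    · intro y hy
      have hP3 : TS.pMat L lam i ν₃ μ''' (Function.update μ''' ((i : ℕ) : Fin (L+1)) y) ≠ 0 :=
        fun h0 => hy (by rw [h0, zero_mul])
      have hF : TS.F (μ''' ((i - 1 : ℕ) : Fin (L+1))) (lam i) (lam (i+1))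
          (μ''' ((i + 1 : ℕ) : Fin (L+1))) y ν₃ ≠ 0 := by
        intro h0; apply hP3
        show _ * _ * TS.F (Function.update μ''' ((i : ℕ) : Fin (L+1)) y ((i - 1 : ℕ) : Fin (L+1)))
            (lam i) (lam (i+1))
            (Function.update μ''' ((i : ℕ) : Fin (L+1)) y ((i + 1 : ℕ) : Fin (L+1)))
            (Function.update μ''' ((i : ℕ) : Fin (L+1)) y ((i : ℕ) : Fin (L+1))) ν₃ = 0
        rw [Function.update_of_ne ne_i1_i, Function.update_of_ne ne_ip1_i,
          Function.update_self, h0, mul_zero]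
      have hcond := TS.F_ne hF
      exact TS.isPath_update L I0 lam hμ''' (by omega) hiL y hcond.1 hcond.2.2.2
  rw [show TS.mulMat L I0 lam (TS.pMat L lam i ν₃)
      (TS.mulMat L I0 lam (TS.pMat L lam (i-1) ν₂) (TS.pMat L lam i ν₁)) μ''' μ
    = ∑ᶠ μ'' ∈ {x : Fin (L+1) → I | TS.IsPath L I0 lam x},
        TS.pMat L lam i ν₃ μ''' μ'' *
          TS.mulMat L I0 lam (TS.pMat L lam (i-1) ν₂) (TS.pMat L lam i ν₁) μ'' μ from rfl]
  rw [loc]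
  simp only [inner_eq]
  -- evaluate the three pMat factors at updated paths
  have P1_eq : ∀ x, TS.pMat L lam i ν₁ (Function.update μ ((i : ℕ) : Fin (L+1)) x) μ
      = TS.Fbar (μ ((i - 1 : ℕ) : Fin (L+1))) (lam i) (lam (i+1)) (μ ((i + 1 : ℕ) : Fin (L+1))) ν₁ x *
        TS.F (μ ((i - 1 : ℕ) : Fin (L+1))) (lam i) (lam (i+1)) (μ ((i + 1 : ℕ) : Fin (L+1)))
          (μ ((i : ℕ) : Fin (L+1))) ν₁ := by
    intro x
    show (∏ j ∈ Finset.univ.erase ((i : ℕ) : Fin (L+1)),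
        if μ j = Function.update μ ((i : ℕ) : Fin (L+1)) x j then (1:R) else 0) *
      TS.Fbar (μ ((i - 1 : ℕ) : Fin (L+1))) (lam i) (lam (i+1)) (μ ((i + 1 : ℕ) : Fin (L+1))) ν₁
        (Function.update μ ((i : ℕ) : Fin (L+1)) x ((i : ℕ) : Fin (L+1))) *
      TS.F (μ ((i - 1 : ℕ) : Fin (L+1))) (lam i) (lam (i+1)) (μ ((i + 1 : ℕ) : Fin (L+1)))
        (μ ((i : ℕ) : Fin (L+1))) ν₁ = _
    rw [Function.update_self,
      show (∏ j ∈ Finset.univ.erase ((i : ℕ) : Fin (L+1)),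
        if μ j = Function.update μ ((i : ℕ) : Fin (L+1)) x j then (1:R) else 0) = 1 from
      Finset.prod_eq_one fun j hj => by
        rw [Function.update_of_ne (Finset.mem_erase.mp hj).1, if_pos rfl], one_mul]
  have P3_eq : ∀ y, TS.pMat L lam i ν₃ μ''' (Function.update μ''' ((i : ℕ) : Fin (L+1)) y)
      = TS.Fbar (μ''' ((i - 1 : ℕ) : Fin (L+1))) (lam i) (lam (i+1)) (μ''' ((i + 1 : ℕ) : Fin (L+1)))
          ν₃ (μ''' ((i : ℕ) : Fin (L+1))) *
        TS.F (μ''' ((i - 1 : ℕ) : Fin (L+1))) (lam i) (lam (i+1)) (μ''' ((i + 1 : ℕ) : Fin (L+1)))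
          y ν₃ := by
    intro y
    show (∏ j ∈ Finset.univ.erase ((i : ℕ) : Fin (L+1)),
        if Function.update μ''' ((i : ℕ) : Fin (L+1)) y j = μ''' j then (1:R) else 0) *
      TS.Fbar (Function.update μ''' ((i : ℕ) : Fin (L+1)) y ((i - 1 : ℕ) : Fin (L+1)))
        (lam i) (lam (i+1))
        (Function.update μ''' ((i : ℕ) : Fin (L+1)) y ((i + 1 : ℕ) : Fin (L+1))) ν₃
        (μ''' ((i : ℕ) : Fin (L+1))) *
      TS.F (Function.update μ''' ((i : ℕ) : Fin (L+1)) y ((i - 1 : ℕ) : Fin (L+1)))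
        (lam i) (lam (i+1))
        (Function.update μ''' ((i : ℕ) : Fin (L+1)) y ((i + 1 : ℕ) : Fin (L+1)))
        (Function.update μ''' ((i : ℕ) : Fin (L+1)) y ((i : ℕ) : Fin (L+1))) ν₃ = _
    rw [Function.update_of_ne ne_i1_i, Function.update_of_ne ne_ip1_i, Function.update_self,
      show (∏ j ∈ Finset.univ.erase ((i : ℕ) : Fin (L+1)),
        if Function.update μ''' ((i : ℕ) : Fin (L+1)) y j = μ''' j then (1:R) else 0) = 1 from
      Finset.prod_eq_one fun j hj => by
        rw [Function.update_of_ne (Finset.mem_erase.mp hj).1, if_pos rfl], one_mul]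
  have P2_eq : ∀ x y, TS.pMat L lam (i - 1) ν₂ (Function.update μ''' ((i : ℕ) : Fin (L+1)) y)
        (Function.update μ ((i : ℕ) : Fin (L+1)) x)
      = (if x = y then (1:R) else 0) *
        (if (∀ j : Fin (L+1), j ≠ ((i - 1 : ℕ) : Fin (L+1)) → j ≠ ((i : ℕ) : Fin (L+1)) →
            μ j = μ''' j) then (1:R) else 0) *
        (TS.Fbar (μ ((i - 2 : ℕ) : Fin (L+1))) (lam (i-1)) (lam i) x ν₂
            (μ''' ((i - 1 : ℕ) : Fin (L+1))) *
          TS.F (μ ((i - 2 : ℕ) : Fin (L+1))) (lam (i-1)) (lam i) x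
            (μ ((i - 1 : ℕ) : Fin (L+1))) ν₂) := by
    intro x y
    show (∏ j ∈ Finset.univ.erase ((i - 1 : ℕ) : Fin (L+1)),
        if Function.update μ ((i : ℕ) : Fin (L+1)) x j
          = Function.update μ''' ((i : ℕ) : Fin (L+1)) y j then (1:R) else 0) *
      TS.Fbar (Function.update μ ((i : ℕ) : Fin (L+1)) x ((i - 1 - 1 : ℕ) : Fin (L+1)))
        (lam (i-1)) (lam (i - 1 + 1))
        (Function.update μ ((i : ℕ) : Fin (L+1)) x ((i - 1 + 1 : ℕ) : Fin (L+1))) ν₂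
        (Function.update μ''' ((i : ℕ) : Fin (L+1)) y ((i - 1 : ℕ) : Fin (L+1))) *
      TS.F (Function.update μ ((i : ℕ) : Fin (L+1)) x ((i - 1 - 1 : ℕ) : Fin (L+1)))
        (lam (i-1)) (lam (i - 1 + 1))
        (Function.update μ ((i : ℕ) : Fin (L+1)) x ((i - 1 + 1 : ℕ) : Fin (L+1)))
        (Function.update μ ((i : ℕ) : Fin (L+1)) x ((i - 1 : ℕ) : Fin (L+1))) ν₂ = _
    rw [e1, e2]
    simp only [Function.update_of_ne ne_i2_i, Function.update_of_ne ne_i1_i,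
      Function.update_self]
    rw [prod_delta]
    have hiff : (∀ j ∈ Finset.univ.erase ((i - 1 : ℕ) : Fin (L+1)),
        Function.update μ ((i : ℕ) : Fin (L+1)) x j
          = Function.update μ''' ((i : ℕ) : Fin (L+1)) y j)
        ↔ (x = y ∧ ∀ j : Fin (L+1), j ≠ ((i - 1 : ℕ) : Fin (L+1)) →
            j ≠ ((i : ℕ) : Fin (L+1)) → μ j = μ''' j) := by
      constructor
      · intro H
        refine ⟨?_, ?_⟩
        · have := H ((i : ℕ) : Fin (L+1)) (Finset.mem_erase.mpr ⟨ne_ic_i1, Finset.mem_univ _⟩)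
          rwa [Function.update_self, Function.update_self] at this
        · intro j hj1 hji
          have := H j (Finset.mem_erase.mpr ⟨hj1, Finset.mem_univ _⟩)
          rwa [Function.update_of_ne hji, Function.update_of_ne hji] at this
      · rintro ⟨hxy, H⟩ j hj
        rcases Finset.mem_erase.mp hj with ⟨hj1, -⟩
        by_cases hji : j = ((i : ℕ) : Fin (L+1))
        · subst hji; rw [Function.update_self, Function.update_self]; exact hxy
        · rw [Function.update_of_ne hji, Function.update_of_ne hji]; exact H j hj1 hji
    rw [if_congr hiff rfl rfl]
    by_cases h1 : x = y <;>
      by_cases h2 : (∀ j : Fin (L+1), j ≠ ((i - 1 : ℕ) : Fin (L+1)) →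
          j ≠ ((i : ℕ) : Fin (L+1)) → μ j = μ''' j) <;>
      simp [h1, h2]
  simp only [P3_eq, P2_eq, P1_eq]
  by_cases hC : (∀ j : Fin (L+1), j ≠ ((i - 1 : ℕ) : Fin (L+1)) →
      j ≠ ((i : ℕ) : Fin (L+1)) → μ j = μ''' j)
  · -- main case
    simp only [if_pos hC]
    have hd3 : μ''' ((i + 1 : ℕ) : Fin (L+1)) = μ ((i + 1 : ℕ) : Fin (L+1)) :=
      (hC _ ne_ip1_i1 ne_ip1_i).symm
    simp only [hd3]
    have hone : (∏ j ∈ (Finset.univ.erase ((i - 1 : ℕ) : Fin (L + 1))).erase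
        ((i : ℕ) : Fin (L + 1)), if μ j = μ''' j then (1 : R) else 0) = 1 := by
      rw [prod_delta, if_pos]
      intro j hj
      rcases Finset.mem_erase.mp hj with ⟨hjic, hj2⟩
      rcases Finset.mem_erase.mp hj2 with ⟨hji1, -⟩
      exact hC j hji1 hjic
    simp only [hone]
    have coll : ∀ y : I,
        (∑ᶠ x, (if x = y then (1:R) else 0) * 1 *
          (TS.Fbar (μ ((i - 2 : ℕ) : Fin (L+1))) (lam (i-1)) (lam i) x ν₂
              (μ''' ((i - 1 : ℕ) : Fin (L+1))) *
            TS.F (μ ((i - 2 : ℕ) : Fin (L+1))) (lam (i-1)) (lam i) x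
              (μ ((i - 1 : ℕ) : Fin (L+1))) ν₂) *
          (TS.Fbar (μ ((i - 1 : ℕ) : Fin (L+1))) (lam i) (lam (i+1))
              (μ ((i + 1 : ℕ) : Fin (L+1))) ν₁ x *
            TS.F (μ ((i - 1 : ℕ) : Fin (L+1))) (lam i) (lam (i+1))
              (μ ((i + 1 : ℕ) : Fin (L+1))) (μ ((i : ℕ) : Fin (L+1))) ν₁))
        = (TS.Fbar (μ ((i - 2 : ℕ) : Fin (L+1))) (lam (i-1)) (lam i) y ν₂
              (μ''' ((i - 1 : ℕ) : Fin (L+1))) *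
            TS.F (μ ((i - 2 : ℕ) : Fin (L+1))) (lam (i-1)) (lam i) y
              (μ ((i - 1 : ℕ) : Fin (L+1))) ν₂) *
          (TS.Fbar (μ ((i - 1 : ℕ) : Fin (L+1))) (lam i) (lam (i+1))
              (μ ((i + 1 : ℕ) : Fin (L+1))) ν₁ y *
            TS.F (μ ((i - 1 : ℕ) : Fin (L+1))) (lam i) (lam (i+1))
              (μ ((i + 1 : ℕ) : Fin (L+1))) (μ ((i : ℕ) : Fin (L+1))) ν₁) := by
      intro y
      rw [finsum_eq_single _ y
        (fun x hx => by rw [if_neg hx, zero_mul, zero_mul, zero_mul]),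
        if_pos rfl, one_mul, one_mul]
    simp only [coll]
    -- convert to finite sums and apply the core identity
    have hXs : ∀ y : I,
        TS.Fbar (μ''' ((i - 1 : ℕ) : Fin (L+1))) (lam i) (lam (i+1))
            (μ ((i + 1 : ℕ) : Fin (L+1))) ν₃ (μ''' ((i : ℕ) : Fin (L+1))) *
            TS.F (μ''' ((i - 1 : ℕ) : Fin (L+1))) (lam i) (lam (i+1))
              (μ ((i + 1 : ℕ) : Fin (L+1))) y ν₃ *
          (TS.Fbar (μ ((i - 2 : ℕ) : Fin (L+1))) (lam (i-1)) (lam i) y ν₂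
              (μ''' ((i - 1 : ℕ) : Fin (L+1))) *
              TS.F (μ ((i - 2 : ℕ) : Fin (L+1))) (lam (i-1)) (lam i) y
                (μ ((i - 1 : ℕ) : Fin (L+1))) ν₂ *
            (TS.Fbar (μ ((i - 1 : ℕ) : Fin (L+1))) (lam i) (lam (i+1))
                (μ ((i + 1 : ℕ) : Fin (L+1))) ν₁ y *
              TS.F (μ ((i - 1 : ℕ) : Fin (L+1))) (lam i) (lam (i+1))
                (μ ((i + 1 : ℕ) : Fin (L+1))) (μ ((i : ℕ) : Fin (L+1))) ν₁)) ≠ 0 →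
        y ∈ TS.Nfin (μ ((i - 1 : ℕ) : Fin (L+1))) (lam i) := by
      intro y hy
      have hA : TS.Fbar (μ ((i - 1 : ℕ) : Fin (L+1))) (lam i) (lam (i+1))
          (μ ((i + 1 : ℕ) : Fin (L+1))) ν₁ y ≠ 0 := fun h0 => hy (by rw [h0]; ring)
      exact TS.mem_Nfin.mpr (by rw [(TS.Fbar_ne hA).1]; exact one_ne_zero)
    rw [← sum_eq_finsum _ _ hXs]
    have hXs2 : ∀ y : I,
        TS.Fbar (μ ((i - 1 : ℕ) : Fin (L+1))) (lam i) (lam (i+1))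
            (μ ((i + 1 : ℕ) : Fin (L+1))) ν₁ y *
          TS.Fbar (μ ((i - 2 : ℕ) : Fin (L+1))) (lam (i-1)) (lam i) y ν₂
            (μ''' ((i - 1 : ℕ) : Fin (L+1))) *
          TS.F (μ ((i - 2 : ℕ) : Fin (L+1))) (lam (i-1)) (lam i) y
            (μ ((i - 1 : ℕ) : Fin (L+1))) ν₂ *
          TS.F (μ''' ((i - 1 : ℕ) : Fin (L+1))) (lam i) (lam (i+1))
            (μ ((i + 1 : ℕ) : Fin (L+1))) y ν₃ ≠ 0 →
        y ∈ TS.Nfin (μ ((i - 1 : ℕ) : Fin (L+1))) (lam i) := by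
      intro y hy
      have hA : TS.Fbar (μ ((i - 1 : ℕ) : Fin (L+1))) (lam i) (lam (i+1))
          (μ ((i + 1 : ℕ) : Fin (L+1))) ν₁ y ≠ 0 := fun h0 => hy (by rw [h0]; ring)
      exact TS.mem_Nfin.mpr (by rw [(TS.Fbar_ne hA).1]; exact one_ne_zero)
    rw [show ∑ y ∈ TS.Nfin (μ ((i - 1 : ℕ) : Fin (L+1))) (lam i),
        TS.Fbar (μ''' ((i - 1 : ℕ) : Fin (L+1))) (lam i) (lam (i+1))
            (μ ((i + 1 : ℕ) : Fin (L+1))) ν₃ (μ''' ((i : ℕ) : Fin (L+1))) *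
            TS.F (μ''' ((i - 1 : ℕ) : Fin (L+1))) (lam i) (lam (i+1))
              (μ ((i + 1 : ℕ) : Fin (L+1))) y ν₃ *
          (TS.Fbar (μ ((i - 2 : ℕ) : Fin (L+1))) (lam (i-1)) (lam i) y ν₂
              (μ''' ((i - 1 : ℕ) : Fin (L+1))) *
              TS.F (μ ((i - 2 : ℕ) : Fin (L+1))) (lam (i-1)) (lam i) y
                (μ ((i - 1 : ℕ) : Fin (L+1))) ν₂ *
            (TS.Fbar (μ ((i - 1 : ℕ) : Fin (L+1))) (lam i) (lam (i+1))
                (μ ((i + 1 : ℕ) : Fin (L+1))) ν₁ y *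
              TS.F (μ ((i - 1 : ℕ) : Fin (L+1))) (lam i) (lam (i+1))
                (μ ((i + 1 : ℕ) : Fin (L+1))) (μ ((i : ℕ) : Fin (L+1))) ν₁))
      = (∑ y ∈ TS.Nfin (μ ((i - 1 : ℕ) : Fin (L+1))) (lam i),
          TS.Fbar (μ ((i - 1 : ℕ) : Fin (L+1))) (lam i) (lam (i+1))
              (μ ((i + 1 : ℕ) : Fin (L+1))) ν₁ y *
            TS.Fbar (μ ((i - 2 : ℕ) : Fin (L+1))) (lam (i-1)) (lam i) y ν₂
              (μ''' ((i - 1 : ℕ) : Fin (L+1))) *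
            TS.F (μ ((i - 2 : ℕ) : Fin (L+1))) (lam (i-1)) (lam i) y
              (μ ((i - 1 : ℕ) : Fin (L+1))) ν₂ *
            TS.F (μ''' ((i - 1 : ℕ) : Fin (L+1))) (lam i) (lam (i+1))
              (μ ((i + 1 : ℕ) : Fin (L+1))) y ν₃) *
          (TS.F (μ ((i - 1 : ℕ) : Fin (L+1))) (lam i) (lam (i+1))
              (μ ((i + 1 : ℕ) : Fin (L+1))) (μ ((i : ℕ) : Fin (L+1))) ν₁ *
            TS.Fbar (μ''' ((i - 1 : ℕ) : Fin (L+1))) (lam i) (lam (i+1))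
              (μ ((i + 1 : ℕ) : Fin (L+1))) ν₃ (μ''' ((i : ℕ) : Fin (L+1)))) from by
      rw [Finset.sum_mul]; exact Finset.sum_congr rfl fun y _ => by ring]
    rw [sum_eq_finsum _ _ hXs2,
      TS.core (μ ((i - 1 : ℕ) : Fin (L+1))) (μ''' ((i - 1 : ℕ) : Fin (L+1)))
        (μ ((i + 1 : ℕ) : Fin (L+1))) (μ ((i - 2 : ℕ) : Fin (L+1)))
        (lam (i-1)) (lam i) (lam (i+1)) ν₁ ν₂ ν₃]
    have hT1 : ∀ υ : I,
        TS.Fbar (lam (i-1)) (lam i) (lam (i+1)) υ ν₁ ν₂ *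
          TS.F (lam (i-1)) (lam i) (lam (i+1)) υ ν₂ ν₃ *
          TS.F (μ ((i - 2 : ℕ) : Fin (L+1))) (lam (i-1)) ν₁
            (μ ((i + 1 : ℕ) : Fin (L+1))) (μ ((i - 1 : ℕ) : Fin (L+1))) υ *
          TS.Fbar (μ ((i - 2 : ℕ) : Fin (L+1))) (lam (i-1)) ν₃
            (μ ((i + 1 : ℕ) : Fin (L+1))) υ (μ''' ((i - 1 : ℕ) : Fin (L+1))) ≠ 0 →
        υ ∈ TS.Nfin (lam (i-1)) ν₁ := by
      intro υ hυ
      have hF : TS.F (μ ((i - 2 : ℕ) : Fin (L+1))) (lam (i-1)) ν₁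
          (μ ((i + 1 : ℕ) : Fin (L+1))) (μ ((i - 1 : ℕ) : Fin (L+1))) υ ≠ 0 :=
        fun h0 => hυ (by rw [h0]; ring)
      exact TS.mem_Nfin.mpr (by rw [(TS.F_ne hF).2.1]; exact one_ne_zero)
    rw [← sum_eq_finsum _ _ hT1, Finset.sum_mul]
    have hT2 : ∀ υ : I,
        1 * TS.Fbar (lam (i - 1)) (lam i) (lam (i + 1)) υ ν₁ ν₂ *
              TS.F (lam (i - 1)) (lam i) (lam (i + 1)) υ ν₂ ν₃ *
              TS.Fbar (μ''' ((i - 1 : ℕ) : Fin (L+1))) (lam i) (lam (i + 1))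
                (μ ((i + 1 : ℕ) : Fin (L+1))) ν₃ (μ''' ((i : ℕ) : Fin (L+1))) *
            TS.F (μ ((i - 1 : ℕ) : Fin (L+1))) (lam i) (lam (i + 1))
              (μ ((i + 1 : ℕ) : Fin (L+1))) (μ ((i : ℕ) : Fin (L+1))) ν₁ *
          TS.F (μ ((i - 2 : ℕ) : Fin (L+1))) (lam (i - 1)) ν₁
            (μ ((i + 1 : ℕ) : Fin (L+1))) (μ ((i - 1 : ℕ) : Fin (L+1))) υ *
        TS.Fbar (μ ((i - 2 : ℕ) : Fin (L+1))) (lam (i - 1)) ν₃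
          (μ ((i + 1 : ℕ) : Fin (L+1))) υ (μ''' ((i - 1 : ℕ) : Fin (L+1))) ≠ 0 →
        υ ∈ TS.Nfin (lam (i-1)) ν₁ := by
      intro υ hυ
      have hF : TS.F (μ ((i - 2 : ℕ) : Fin (L+1))) (lam (i-1)) ν₁
          (μ ((i + 1 : ℕ) : Fin (L+1))) (μ ((i - 1 : ℕ) : Fin (L+1))) υ ≠ 0 :=
        fun h0 => hυ (by rw [h0]; ring)
      exact TS.mem_Nfin.mpr (by rw [(TS.F_ne hF).2.1]; exact one_ne_zero)
    rw [← sum_eq_finsum _ _ hT2]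
    exact Finset.sum_congr rfl fun υ _ => by ring

  · -- degenerate case: the two paths differ away from sites i-1, i
    simp only [if_neg hC, mul_zero, zero_mul, finsum_zero]
    have hz : (∏ j ∈ (Finset.univ.erase ((i - 1 : ℕ) : Fin (L + 1))).erase
        ((i : ℕ) : Fin (L + 1)), if μ j = μ''' j then (1 : R) else 0) = 0 := by
      rw [prod_delta, if_neg]
      intro hcc
      exact hC fun j hj1 hji => hcc j
        (Finset.mem_erase.mpr ⟨hji, Finset.mem_erase.mpr ⟨hj1, Finset.mem_univ j⟩⟩)
    simp only [hz, zero_mul, finsum_zero]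
end
end
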